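/- arXiv:1510.05072 — 10 statements merged into one kernel-verified Lean document; each statement's English description precedes it below -/
import Mathlib

section
/- Let F be a field, n a positive integer, and L = {(i₁, j₁)} a 1-step ladder on n (i.e., 1 ≤ i₁ ≤ n and 1 ≤ j₁ ≤ n). Then the ladder matrix space M_L is zero product determined as a Lie algebra under the commutator bracket [x,y] = xy - yx: for every F-vector space X and every bilinear map φ : M_L × M_L → X satisfying φ(x,y) = 0 whenever [x,y] = 0, there exists an F-linear map f : M_L → X such that φ(x,y) = f([x,y]) for all x, y ∈ M_L. -/
open Matrix TensorProduct

/-- The ladder matrices on the 1-step ladder `L = {(i₁, j₁)}` on `n`: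
the span of the matrix units `e_{i,j}` (1-based) with `1 ≤ i ≤ i₁` and `j₁ ≤ j ≤ n`. -/
def ladderModule (F : Type*) [Field F] (n i₁ j₁ : ℕ) :
    Submodule F (Matrix (Fin n) (Fin n) F) :=
  Submodule.span F
    { A | ∃ i j : Fin n, (i : ℕ) + 1 ≤ i₁ ∧ j₁ ≤ (j : ℕ) + 1 ∧
      A = Matrix.single i j 1 }

section Aux

variable {F : Type*} [Field F] {n i₁ j₁ : ℕ}

/-- The ladder condition on a (0-based) index pair. -/
def lcond (i₁ j₁ : ℕ) (i j : Fin n) : Prop :=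
  (i : ℕ) + 1 ≤ i₁ ∧ j₁ ≤ (j : ℕ) + 1

instance (i j : Fin n) : Decidable (lcond i₁ j₁ i j) := by
  unfold lcond; infer_instance

/-- The ladder module described by a support condition. -/
def ladderSet (F : Type*) [Field F] (n i₁ j₁ : ℕ) :
    Submodule F (Matrix (Fin n) (Fin n) F) where
  carrier := {A | ∀ i j : Fin n, ¬ lcond i₁ j₁ i j → A i j = 0}
  add_mem' := by
    intro a b ha hb i j h
    simp [Matrix.add_apply, ha i j h, hb i j h]
  zero_mem' := by intro i j _; simp
  smul_mem' := by
    intro c a ha i j h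
    simp [Matrix.smul_apply, ha i j h]

lemma ladderModule_eq_ladderSet :
    ladderModule F n i₁ j₁ = ladderSet F n i₁ j₁ := by
  apply le_antisymm
  · rw [ladderModule, Submodule.span_le]
    rintro A ⟨i, j, h1, h2, rfl⟩ i' j' h
    by_cases hi : i = i'
    · by_cases hj : j = j'
      · subst hi; subst hj; exact absurd ⟨h1, h2⟩ h
      · exact Matrix.single_apply_of_ne _ _ _ _ _ (by tauto)
    · exact Matrix.single_apply_of_ne _ _ _ _ _ (by tauto)
  · intro A hA
    rw [Matrix.matrix_eq_sum_single A]
    refine Submodule.sum_mem _ fun i _ => Submodule.sum_mem _ fun j _ => ?_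
    by_cases h : lcond i₁ j₁ i j
    · have : Matrix.single i j (A i j) =
          A i j • Matrix.single i j (1 : F) := by simp
      rw [this]
      exact Submodule.smul_mem _ _ (Submodule.subset_span ⟨i, j, h.1, h.2, rfl⟩)
    · rw [hA i j h]
      simp

lemma mem_ladder_iff {A : Matrix (Fin n) (Fin n) F} :
    A ∈ ladderModule F n i₁ j₁ ↔ A ∈ ladderSet F n i₁ j₁ := by
  rw [ladderModule_eq_ladderSet]

/-- The matrix unit as an element of the ladder module. -/
def EU (i j : Fin n) (h : lcond i₁ j₁ i j) : ladderModule F n i₁ j₁ :=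
  ⟨Matrix.single i j 1, Submodule.subset_span ⟨i, j, h.1, h.2, rfl⟩⟩

@[simp] lemma EU_coe (i j : Fin n) (h : lcond i₁ j₁ i j) :
    ((EU i j h : ladderModule F n i₁ j₁) : Matrix (Fin n) (Fin n) F) =
      Matrix.single i j 1 := rfl

/-- Product of matrix units. -/
lemma stdMul (a b c d : Fin n) :
    Matrix.single a b (1 : F) * Matrix.single c d 1 =
      if b = c then Matrix.single a d 1 else 0 := by
  by_cases h : b = c
  · subst h; rw [if_pos rfl, Matrix.single_mul_single_same, one_mul]
  · rw [if_neg h, Matrix.single_mul_single_of_ne (h := h)]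


variable {X : Type*} [AddCommGroup X] [Module F X]
variable (φ : ladderModule F n i₁ j₁ →ₗ[F] ladderModule F n i₁ j₁ →ₗ[F] X)

section Identities

variable (hφ : ∀ x y : ladderModule F n i₁ j₁,
      ((x : Matrix (Fin n) (Fin n) F) * y - (y : Matrix (Fin n) (Fin n) F) * x = 0) →
        φ x y = 0)

include hφ

lemma phi_self (x : ladderModule F n i₁ j₁) : φ x x = 0 :=
  hφ x x (by rw [sub_self])

lemma phi_antisymm (x y : ladderModule F n i₁ j₁) : φ x y = - φ y x := by
  have h := phi_self φ hφ (x + y)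
  simp only [map_add, LinearMap.add_apply, phi_self φ hφ x, phi_self φ hφ y,
    zero_add, add_zero] at h
  rw [eq_neg_iff_add_eq_zero, add_comm]
  exact h


/-- `φ` vanishes on pairs of commuting matrix units. -/
lemma phi_EU_zero_of_ne (i j k l : Fin n) (hij : lcond i₁ j₁ i j) (hkl : lcond i₁ j₁ k l)
    (hjk : j ≠ k) (hli : l ≠ i) :
    φ (EU i j hij) (EU k l hkl) = 0 := by
  apply hφ
  rw [EU_coe, EU_coe, Matrix.single_mul_single_of_ne (h := hjk),
    Matrix.single_mul_single_of_ne (h := hli), sub_zero]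

/-- Independence of the middle index. -/
lemma phi_middle (i l k k' : Fin n)
    (hik : lcond i₁ j₁ i k) (hkl : lcond i₁ j₁ k l)
    (hik' : lcond i₁ j₁ i k') (hk'l : lcond i₁ j₁ k' l)
    (hli : l ≠ i) :
    φ (EU i k hik) (EU k l hkl) = φ (EU i k' hik') (EU k' l hk'l) := by
  by_cases hkk' : k = k'
  · subst hkk'; rfl
  · have h := hφ (EU i k hik - EU i k' hik') (EU k l hkl + EU k' l hk'l) (by
      simp only [Submodule.coe_sub, Submodule.coe_add, EU_coe]
      have hk'k : ¬ k' = k := fun h => hkk' h.symm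
      have hil : ¬ i = l := fun h => hli h.symm
      have hli' : ¬ l = i := hli
      simp only [sub_mul, mul_sub, add_mul, mul_add, stdMul, hkk', hk'k, hli', hil,
        if_true, if_false, ite_self, eq_self_iff_true]
      abel)
    simp only [map_sub, map_add, LinearMap.sub_apply, LinearMap.add_apply,
      phi_EU_zero_of_ne φ hφ i k k' l hik hk'l hkk' hli,
      phi_EU_zero_of_ne φ hφ i k' k l hik' hkl (Ne.symm hkk') hli,
      add_zero, zero_add, sub_zero, zero_sub, ← sub_eq_add_neg] at h
    exact sub_eq_zero.mp h

/-- The cocycle identity on the diagonal. -/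
lemma phi_cocycle (i j k : Fin n)
    (hri : (i : ℕ) + 1 ≤ i₁) (hci : j₁ ≤ (i : ℕ) + 1)
    (hrj : (j : ℕ) + 1 ≤ i₁) (hcj : j₁ ≤ (j : ℕ) + 1)
    (hrk : (k : ℕ) + 1 ≤ i₁) (hck : j₁ ≤ (k : ℕ) + 1)
    (hij : i ≠ j) (hjk : j ≠ k) (hki : k ≠ i) :
    φ (EU i j ⟨hri, hcj⟩) (EU j i ⟨hrj, hci⟩)
      + φ (EU j k ⟨hrj, hck⟩) (EU k j ⟨hrk, hcj⟩)
      + φ (EU k i ⟨hrk, hci⟩) (EU i k ⟨hri, hck⟩) = 0 := by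
  have h := hφ (EU i j ⟨hri, hcj⟩ + EU j k ⟨hrj, hck⟩ + EU k i ⟨hrk, hci⟩)
      (EU j i ⟨hrj, hci⟩ + EU k j ⟨hrk, hcj⟩ + EU i k ⟨hri, hck⟩) (by
    simp only [Submodule.coe_add, EU_coe, EU]
    have h1 : ¬ i = j := hij
    have h2 : ¬ j = i := fun h => hij h.symm
    have h3 : ¬ j = k := hjk
    have h4 : ¬ k = j := fun h => hjk h.symm
    have h5 : ¬ k = i := hki
    have h6 : ¬ i = k := fun h => hki h.symm
    simp only [add_mul, mul_add, stdMul, h1, h2, h3, h4, h5, h6,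
      if_true, if_false, ite_self, eq_self_iff_true]
    abel)
  simp only [map_add, LinearMap.add_apply,
    phi_EU_zero_of_ne φ hφ i j k j ⟨hri, hcj⟩ ⟨hrk, hcj⟩ hjk (Ne.symm hij),
    phi_EU_zero_of_ne φ hφ i j i k ⟨hri, hcj⟩ ⟨hri, hck⟩ (Ne.symm hij) hki,
    phi_EU_zero_of_ne φ hφ j k j i ⟨hrj, hck⟩ ⟨hrj, hci⟩ (Ne.symm hjk) hij,
    phi_EU_zero_of_ne φ hφ j k i k ⟨hrj, hck⟩ ⟨hri, hck⟩ hki (Ne.symm hjk),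
    phi_EU_zero_of_ne φ hφ k i j i ⟨hrk, hci⟩ ⟨hrj, hci⟩ hij (Ne.symm hki),
    phi_EU_zero_of_ne φ hφ k i k j ⟨hrk, hci⟩ ⟨hrk, hcj⟩ (Ne.symm hki) hjk,
    add_zero, zero_add] at h
  exact h

end Identities

section Machinery

set_option linter.unusedSectionVars false

variable (F n) in
/-- Linear functional summing entries against coefficients. -/
def entrySum (c : Fin n → Fin n → X) : Matrix (Fin n) (Fin n) F →ₗ[F] X where
  toFun A := ∑ i, ∑ l, A i l • c i l
  map_add' A B := by simp [Matrix.add_apply, add_smul, Finset.sum_add_distrib]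
  map_smul' r A := by simp [Matrix.smul_apply, smul_eq_mul, mul_smul, Finset.smul_sum]

lemma entrySum_std (c : Fin n → Fin n → X) (a b : Fin n) (r : F) :
    entrySum F n c (Matrix.single a b r) = r • c a b := by
  classical
  show (∑ i, ∑ l, Matrix.single a b r i l • c i l) = r • c a b
  rw [Fintype.sum_eq_single a, Fintype.sum_eq_single b,
    Matrix.single_apply_same]
  · intro l hl
    rw [Matrix.single_apply_of_col_ne _ _ (Ne.symm hl), zero_smul]
  · intro i hi
    exact Finset.sum_eq_zero fun l _ => by
      rw [Matrix.single_apply_of_row_ne (Ne.symm hi), zero_smul]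

variable (F n i₁ j₁) in
/-- Truncation to the ladder support. -/
def truncMap : Matrix (Fin n) (Fin n) F →ₗ[F] Matrix (Fin n) (Fin n) F where
  toFun A := Matrix.of fun i j => if lcond i₁ j₁ i j then A i j else 0
  map_add' A B := by
    ext i j
    by_cases h : lcond i₁ j₁ i j <;> simp [h]
  map_smul' r A := by
    ext i j
    by_cases h : lcond i₁ j₁ i j <;> simp [h]

lemma truncMap_apply (A : Matrix (Fin n) (Fin n) F) (i j : Fin n) :
    truncMap F n i₁ j₁ A i j = if lcond i₁ j₁ i j then A i j else 0 := rfl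

lemma truncMap_mem (A : Matrix (Fin n) (Fin n) F) :
    truncMap F n i₁ j₁ A ∈ ladderSet F n i₁ j₁ := fun i j h => by
  rw [truncMap_apply, if_neg h]

lemma truncMap_of_mem {A : Matrix (Fin n) (Fin n) F} (hA : A ∈ ladderSet F n i₁ j₁) :
    truncMap F n i₁ j₁ A = A := by
  ext i j
  rw [truncMap_apply]
  by_cases h : lcond i₁ j₁ i j
  · rw [if_pos h]
  · rw [if_neg h, hA i j h]

lemma std_mem_ladderSet {i j : Fin n} (h : lcond i₁ j₁ i j) :
    Matrix.single i j (1 : F) ∈ ladderSet F n i₁ j₁ := by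
  intro i' j' h'
  apply Matrix.single_apply_of_ne
  rintro ⟨rfl, rfl⟩
  exact h' h

variable (F n i₁ j₁) in
/-- Truncation as a map into the ladder module. -/
def projL : Matrix (Fin n) (Fin n) F →ₗ[F] ladderModule F n i₁ j₁ :=
  LinearMap.codRestrict _ (truncMap F n i₁ j₁) fun A => by
    exact mem_ladder_iff.mpr (truncMap_mem A)

lemma projL_coe (A : Matrix (Fin n) (Fin n) F) :
    ((projL F n i₁ j₁ A : ladderModule F n i₁ j₁) : Matrix (Fin n) (Fin n) F)
      = truncMap F n i₁ j₁ A := rfl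

lemma projL_val (x : ladderModule F n i₁ j₁) :
    projL F n i₁ j₁ (x : Matrix (Fin n) (Fin n) F) = x := by
  exact Subtype.ext (truncMap_of_mem (mem_ladder_iff.mp x.2))

lemma projL_std {i j : Fin n} (h : lcond i₁ j₁ i j) :
    projL F n i₁ j₁ (Matrix.single i j 1) = EU i j h :=
  Subtype.ext (truncMap_of_mem (std_mem_ladderSet h))

lemma projL_std_zero {i j : Fin n} (h : ¬ lcond i₁ j₁ i j) :
    projL F n i₁ j₁ (Matrix.single i j (1 : F)) = 0 := by
  apply Subtype.ext
  show truncMap F n i₁ j₁ (Matrix.single i j 1) = 0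
  ext i' j'
  rw [truncMap_apply]
  by_cases hc : lcond i₁ j₁ i' j'
  · rw [if_pos hc, Matrix.zero_apply]
    apply Matrix.single_apply_of_ne
    rintro ⟨rfl, rfl⟩
    exact h hc
  · rw [if_neg hc, Matrix.zero_apply]

lemma ladder_mul_zero (hlt : i₁ < j₁) (x y : ladderModule F n i₁ j₁) :
    (x : Matrix (Fin n) (Fin n) F) * y = 0 := by
  have hx := mem_ladder_iff.mp x.2
  have hy := mem_ladder_iff.mp y.2
  ext a b
  rw [Matrix.mul_apply, Matrix.zero_apply]
  refine Finset.sum_eq_zero fun k _ => ?_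
  by_cases hk : j₁ ≤ (k : ℕ) + 1
  · have hkb : ¬ lcond i₁ j₁ k b := fun hc => absurd hc.1 (by omega)
    rw [hy k b hkb, mul_zero]
  · have : ¬ lcond i₁ j₁ a k := fun hc => hk hc.2
    rw [hx a k this, zero_mul]

variable (F n i₁ j₁) in
/-- The candidate bilinear map built from the coefficients `c`. -/
def psiMap (c : Fin n → Fin n → X) :
    Matrix (Fin n) (Fin n) F →ₗ[F] Matrix (Fin n) (Fin n) F →ₗ[F] X :=
  LinearMap.mk₂ F (fun A B => entrySum F n c
      (truncMap F n i₁ j₁ A * truncMap F n i₁ j₁ B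
        - truncMap F n i₁ j₁ B * truncMap F n i₁ j₁ A))
    (fun A A' B => by
      rw [map_add, add_mul, mul_add, ← sub_add_sub_comm, map_add])
    (fun r A B => by
      rw [LinearMap.map_smul, smul_mul_assoc, mul_smul_comm, ← smul_sub,
        _root_.map_smul])
    (fun A B B' => by
      rw [map_add, mul_add, add_mul, ← sub_add_sub_comm, map_add])
    (fun r A B => by
      rw [LinearMap.map_smul, smul_mul_assoc, mul_smul_comm, ← smul_sub,
        _root_.map_smul])

lemma psiMap_apply (c : Fin n → Fin n → X) (A B : Matrix (Fin n) (Fin n) F) :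
    psiMap F n i₁ j₁ c A B = entrySum F n c
      (truncMap F n i₁ j₁ A * truncMap F n i₁ j₁ B
        - truncMap F n i₁ j₁ B * truncMap F n i₁ j₁ A) := rfl

end Machinery

section Main

set_option linter.unusedSectionVars false

variable (φ : ladderModule F n i₁ j₁ →ₗ[F] ladderModule F n i₁ j₁ →ₗ[F] X)
variable (hφ : ∀ x y : ladderModule F n i₁ j₁,
      ((x : Matrix (Fin n) (Fin n) F) * y - (y : Matrix (Fin n) (Fin n) F) * x = 0) →
        φ x y = 0)

include hφ

lemma pair_eq (k₀ : Fin n) (hrk : (k₀ : ℕ) + 1 ≤ i₁) (hck : j₁ ≤ (k₀ : ℕ) + 1)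
    (c : Fin n → Fin n → X)
    (hc : ∀ i l (h : lcond i₁ j₁ i l),
      c i l = φ (EU i k₀ ⟨h.1, hck⟩) (EU k₀ l ⟨hrk, h.2⟩))
    (i j k l : Fin n) :
    φ.compl₁₂ (projL F n i₁ j₁) (projL F n i₁ j₁)
        (Matrix.single i j 1) (Matrix.single k l 1)
      = psiMap F n i₁ j₁ c (Matrix.single i j 1) (Matrix.single k l 1) := by
  by_cases hij : lcond i₁ j₁ i j
  · by_cases hkl : lcond i₁ j₁ k l
    · rw [LinearMap.compl₁₂_apply, projL_std hij, projL_std hkl, psiMap_apply,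
        truncMap_of_mem (std_mem_ladderSet hij), truncMap_of_mem (std_mem_ladderSet hkl),
        stdMul, stdMul]
      by_cases hjk : j = k
      · subst hjk
        rw [if_pos rfl]
        by_cases hli : i = l
        · subst hli
          rw [if_pos rfl, map_sub, entrySum_std, entrySum_std, one_smul, one_smul,
            hc i i ⟨hij.1, hkl.2⟩, hc j j ⟨hkl.1, hij.2⟩]
          by_cases hij' : i = j
          · subst hij'
            rw [phi_self φ hφ, sub_self]
          · by_cases hjk0 : j = k₀
            · subst hjk0
              rw [phi_self φ hφ, sub_zero]
            · by_cases hik0 : i = k₀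
              · subst hik0
                rw [phi_self φ hφ, zero_sub]
                exact phi_antisymm φ hφ _ _
              · have hcoc := phi_cocycle φ hφ i j k₀ hij.1 hkl.2 hkl.1 hij.2 hrk hck
                  hij' hjk0 (fun h => hik0 h.symm)
                rw [phi_antisymm φ hφ (EU k₀ i ⟨hrk, hkl.2⟩) (EU i k₀ ⟨hij.1, hck⟩),
                  add_neg_eq_zero] at hcoc
                rw [eq_sub_iff_add_eq]
                exact hcoc
        · rw [if_neg (fun h => hli h.symm), sub_zero, entrySum_std, one_smul,
            hc i l ⟨hij.1, hkl.2⟩]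
          exact phi_middle φ hφ i l j k₀ hij hkl ⟨hij.1, hck⟩ ⟨hrk, hkl.2⟩
            (fun h => hli h.symm)
      · rw [if_neg hjk]
        by_cases hli : i = l
        · subst hli
          rw [if_pos rfl, zero_sub, map_neg, entrySum_std, one_smul,
            hc k j ⟨hkl.1, hij.2⟩, phi_antisymm φ hφ (EU i j hij) (EU k i hkl), neg_inj]
          exact phi_middle φ hφ k j i k₀ hkl hij ⟨hkl.1, hck⟩ ⟨hrk, hij.2⟩ hjk
        · rw [if_neg (fun h => hli h.symm), sub_zero, map_zero]
          exact phi_EU_zero_of_ne φ hφ i j k l hij hkl hjk (fun h => hli h.symm)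
    · have hT : truncMap F n i₁ j₁ (Matrix.single k l (1 : F)) = 0 := by
        have := projL_std_zero (F := F) hkl
        rw [← projL_coe, this, ZeroMemClass.coe_zero]
      rw [LinearMap.compl₁₂_apply, projL_std_zero hkl, map_zero, psiMap_apply, hT,
        mul_zero, zero_mul, sub_zero, map_zero]
  · have hT : truncMap F n i₁ j₁ (Matrix.single i j (1 : F)) = 0 := by
      have := projL_std_zero (F := F) hij
      rw [← projL_coe, this, ZeroMemClass.coe_zero]
    rw [LinearMap.compl₁₂_apply, projL_std_zero hij, map_zero, LinearMap.zero_apply,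
      psiMap_apply, hT, mul_zero, zero_mul, sub_zero, map_zero]

end Main

end Aux

/-- The matrix Lie algebra on a one-step ladder is zero product determined
under the commutator bracket. -/
theorem ladderModule_zero_product_determined_lie
    (F : Type*) [Field F] (n i₁ j₁ : ℕ) (hn : 1 ≤ n)
    (hi₁ : 1 ≤ i₁) (hi₁n : i₁ ≤ n) (hj₁ : 1 ≤ j₁) (hj₁n : j₁ ≤ n)
    (X : Type*) [AddCommGroup X] [Module F X]
    (φ : ladderModule F n i₁ j₁ →ₗ[F] ladderModule F n i₁ j₁ →ₗ[F] X)
    (hφ : ∀ x y : ladderModule F n i₁ j₁,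
      ((x : Matrix (Fin n) (Fin n) F) * y - (y : Matrix (Fin n) (Fin n) F) * x = 0) →
        φ x y = 0) :
    ∃ f : ladderModule F n i₁ j₁ →ₗ[F] X,
      ∀ x y z : ladderModule F n i₁ j₁,
        (z : Matrix (Fin n) (Fin n) F) =
            (x : Matrix (Fin n) (Fin n) F) * y - (y : Matrix (Fin n) (Fin n) F) * x →
          φ x y = f z := by
  by_cases hcase : j₁ ≤ i₁
  · set k₀ : Fin n := ⟨j₁ - 1, by omega⟩ with hk₀def
    have hrk : (k₀ : ℕ) + 1 ≤ i₁ := by show j₁ - 1 + 1 ≤ i₁; omega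
    have hck : j₁ ≤ (k₀ : ℕ) + 1 := by show j₁ ≤ j₁ - 1 + 1; omega
    classical
    set c : Fin n → Fin n → X := fun i l =>
      if h : lcond i₁ j₁ i l then φ (EU i k₀ ⟨h.1, hck⟩) (EU k₀ l ⟨hrk, h.2⟩) else 0
      with hcdef
    have hc : ∀ i l (h : lcond i₁ j₁ i l),
        c i l = φ (EU i k₀ ⟨h.1, hck⟩) (EU k₀ l ⟨hrk, h.2⟩) := fun i l h => dif_pos h
    have hext : φ.compl₁₂ (projL F n i₁ j₁) (projL F n i₁ j₁) = psiMap F n i₁ j₁ c :=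
      LinearMap.ext_basis (Matrix.stdBasis F (Fin n) (Fin n))
        (Matrix.stdBasis F (Fin n) (Fin n)) (by
          rintro ⟨i, j⟩ ⟨k, l⟩
          rw [Matrix.stdBasis_eq_single, Matrix.stdBasis_eq_single]
          exact pair_eq φ hφ k₀ hrk hck c hc i j k l)
    refine ⟨(entrySum F n c).comp (Submodule.subtype _), fun x y z hz => ?_⟩
    have hkey := DFunLike.congr_fun
      (DFunLike.congr_fun hext (x : Matrix (Fin n) (Fin n) F))
      (y : Matrix (Fin n) (Fin n) F)
    rw [LinearMap.compl₁₂_apply, projL_val, projL_val, psiMap_apply,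
      truncMap_of_mem (mem_ladder_iff.mp x.2),
      truncMap_of_mem (mem_ladder_iff.mp y.2)] at hkey
    rw [LinearMap.comp_apply]
    show φ x y = entrySum F n c (z : Matrix (Fin n) (Fin n) F)
    rw [hz]
    exact hkey
  · refine ⟨0, fun x y z hz => ?_⟩
    rw [LinearMap.zero_apply]
    exact hφ x y (by
      rw [ladder_mul_zero (by omega) x y, ladder_mul_zero (by omega) y x, sub_zero])
end

section
/- Let F be a field, n a positive integer, and L = {(i₁, j₁)} a 1-step ladder on n. Let μ : M_L ⊗_F M_L → M_L be the linear map induced by the bilinear map (x,y) ↦ [x,y] = xy - yx. Then the kernel of μ is spanned by the rank-one tensors it contains, i.e., Ker μ = span{ x ⊗ y : x, y ∈ M_L, [x,y] = 0 }. -/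
open Matrix TensorProduct

set_option maxHeartbeats 1000000
set_option synthInstance.maxHeartbeats 1000000

section LadderAux

variable (F : Type*) [Field F] (n i₁ j₁ : ℕ)

/-- The span of rank-one tensors with commuting factors. -/
def rkSpan : Submodule F (ladderModule F n i₁ j₁ ⊗[F] ladderModule F n i₁ j₁) :=
  Submodule.span F
    { t | ∃ x y : ladderModule F n i₁ j₁,
      ((x : Matrix (Fin n) (Fin n) F) * y - (y : Matrix (Fin n) (Fin n) F) * x = 0) ∧
      t = x ⊗ₜ y }

lemma sub_mem' (p : Submodule F (ladderModule F n i₁ j₁ ⊗[F] ladderModule F n i₁ j₁))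
    {x y : ladderModule F n i₁ j₁ ⊗[F] ladderModule F n i₁ j₁}
    (hx : x ∈ p) (hy : y ∈ p) : x - y ∈ p := by
  have e : x - y = x + (-1 : F) • y := by module
  exact e ▸ p.add_mem hx (p.smul_mem (-1 : F) hy)

/-- Matrix units inside the ladder module. -/
def eU (p q : Fin n) (hp : (p : ℕ) + 1 ≤ i₁) (hq : j₁ ≤ (q : ℕ) + 1) :
    ladderModule F n i₁ j₁ :=
  ⟨Matrix.single p q 1, Submodule.subset_span ⟨p, q, hp, hq, rfl⟩⟩

@[simp] lemma coe_eU (p q : Fin n) (hp : (p : ℕ) + 1 ≤ i₁) (hq : j₁ ≤ (q : ℕ) + 1) :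
    ((eU F n i₁ j₁ p q hp hq : ladderModule F n i₁ j₁) : Matrix (Fin n) (Fin n) F)
      = Matrix.single p q 1 := rfl

lemma mem_rkSpan_of_comm (x y : ladderModule F n i₁ j₁)
    (h : (x : Matrix (Fin n) (Fin n) F) * y = (y : Matrix (Fin n) (Fin n) F) * x) :
    x ⊗ₜ[F] y ∈ rkSpan F n i₁ j₁ :=
  Submodule.subset_span ⟨x, y, by rw [h, sub_self], rfl⟩

lemma sym_mem_rkSpan (x y : ladderModule F n i₁ j₁) :
    x ⊗ₜ[F] y + y ⊗ₜ[F] x ∈ rkSpan F n i₁ j₁ := by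
  have e : x ⊗ₜ[F] y + y ⊗ₜ[F] x
      = (x + y) ⊗ₜ[F] (x + y) - x ⊗ₜ[F] x - y ⊗ₜ[F] y := by
    simp only [tmul_add, add_tmul]; abel
  rw [e]
  exact sub_mem' F n i₁ j₁ _ (sub_mem' F n i₁ j₁ _
    (mem_rkSpan_of_comm F n i₁ j₁ _ _ rfl)
    (mem_rkSpan_of_comm F n i₁ j₁ _ _ rfl)) (mem_rkSpan_of_comm F n i₁ j₁ _ _ rfl)

/-- The "change of middle index" relation. -/
lemma step_mem_rkSpan (p q q' r : Fin n)
    (hp : (p : ℕ) + 1 ≤ i₁) (hq1 : (q : ℕ) + 1 ≤ i₁) (hq2 : j₁ ≤ (q : ℕ) + 1)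
    (hq'1 : (q' : ℕ) + 1 ≤ i₁) (hq'2 : j₁ ≤ (q' : ℕ) + 1)
    (hr : j₁ ≤ (r : ℕ) + 1) (hrp : r ≠ p) :
    eU F n i₁ j₁ p q hp hq2 ⊗ₜ[F] eU F n i₁ j₁ q r hq1 hr
      - eU F n i₁ j₁ p q' hp hq'2 ⊗ₜ[F] eU F n i₁ j₁ q' r hq'1 hr
      ∈ rkSpan F n i₁ j₁ := by
  rcases eq_or_ne q q' with rfl | hne
  · have e : eU F n i₁ j₁ p q hp hq2 ⊗ₜ[F] eU F n i₁ j₁ q r hq1 hr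
        - eU F n i₁ j₁ p q hp hq'2 ⊗ₜ[F] eU F n i₁ j₁ q r hq'1 hr = 0 := by
      rw [show eU F n i₁ j₁ p q hp hq'2 = eU F n i₁ j₁ p q hp hq2 from rfl,
        show eU F n i₁ j₁ q r hq'1 hr = eU F n i₁ j₁ q r hq1 hr from rfl, sub_self]
    rw [e]; exact zero_mem _
  · have e : eU F n i₁ j₁ p q hp hq2 ⊗ₜ[F] eU F n i₁ j₁ q r hq1 hr
        - eU F n i₁ j₁ p q' hp hq'2 ⊗ₜ[F] eU F n i₁ j₁ q' r hq'1 hr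
        = (eU F n i₁ j₁ p q hp hq2 - eU F n i₁ j₁ p q' hp hq'2) ⊗ₜ[F]
            (eU F n i₁ j₁ q r hq1 hr + eU F n i₁ j₁ q' r hq'1 hr)
          - eU F n i₁ j₁ p q hp hq2 ⊗ₜ[F] eU F n i₁ j₁ q' r hq'1 hr
          + eU F n i₁ j₁ p q' hp hq'2 ⊗ₜ[F] eU F n i₁ j₁ q r hq1 hr := by
      simp only [sub_tmul, tmul_add]; abel
    rw [e]
    refine add_mem (sub_mem' F n i₁ j₁ _ (mem_rkSpan_of_comm F n i₁ j₁ _ _ ?_)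
      (mem_rkSpan_of_comm F n i₁ j₁ _ _ ?_)) (mem_rkSpan_of_comm F n i₁ j₁ _ _ ?_)
    · simp only [AddSubgroupClass.coe_sub, Submodule.coe_add, coe_eU, sub_mul, mul_add,
        add_mul, mul_sub, Matrix.single_mul_single_same, one_mul,
        Matrix.single_mul_single_of_ne, hne, hne.symm, hrp, ne_eq, not_false_iff]
      abel
    · simp [Matrix.single_mul_single_of_ne, hne, hrp, ne_eq]
    · simp [Matrix.single_mul_single_of_ne, hne.symm, hrp, ne_eq]

/-- Auxiliary tensors used to define the section `sigL`. -/
noncomputable def cT (b₀ : Fin n) (hb : (b₀ : ℕ) + 1 = j₁) (x y : Fin n) :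
    ladderModule F n i₁ j₁ ⊗[F] ladderModule F n i₁ j₁ :=
  if h : (x : ℕ) + 1 ≤ i₁ ∧ j₁ ≤ (y : ℕ) + 1 ∧ j₁ ≤ i₁ then
    eU F n i₁ j₁ x b₀ h.1 (le_of_eq hb.symm) ⊗ₜ[F]
      eU F n i₁ j₁ b₀ y (by rw [hb]; exact h.2.2) h.2.1
  else 0

lemma cT_pos (b₀ : Fin n) (hb : (b₀ : ℕ) + 1 = j₁) (x y : Fin n)
    (h1 : (x : ℕ) + 1 ≤ i₁) (h2 : j₁ ≤ (y : ℕ) + 1) (h3 : j₁ ≤ i₁) :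
    cT F n i₁ j₁ b₀ hb x y
      = eU F n i₁ j₁ x b₀ h1 (le_of_eq hb.symm) ⊗ₜ[F]
          eU F n i₁ j₁ b₀ y (by rw [hb]; exact h3) h2 := by
  unfold cT
  rw [dif_pos ⟨h1, h2, h3⟩]

/-- A linear "section" of the bracket map. -/
noncomputable def sigL (b₀ : Fin n) (hb : (b₀ : ℕ) + 1 = j₁) :
    Matrix (Fin n) (Fin n) F →ₗ[F] ladderModule F n i₁ j₁ ⊗[F] ladderModule F n i₁ j₁ where
  toFun m := ∑ x : Fin n, ∑ y : Fin n, m x y • cT F n i₁ j₁ b₀ hb x y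
  map_add' a b := by
    simp only [Matrix.add_apply, add_smul, Finset.sum_add_distrib]
  map_smul' r a := by
    simp only [Matrix.smul_apply, smul_eq_mul, mul_smul, RingHom.id_apply, Finset.smul_sum]

lemma sigL_std (b₀ : Fin n) (hb : (b₀ : ℕ) + 1 = j₁) (p q : Fin n) :
    sigL F n i₁ j₁ b₀ hb (Matrix.single p q (1 : F)) = cT F n i₁ j₁ b₀ hb p q := by
  have e0 : sigL F n i₁ j₁ b₀ hb (Matrix.single p q (1 : F))
      = ∑ x : Fin n, ∑ y : Fin n,
          Matrix.single p q (1 : F) x y • cT F n i₁ j₁ b₀ hb x y := rfl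
  rw [e0, Finset.sum_eq_single p]
  · rw [Finset.sum_eq_single q]
    · rw [Matrix.single_apply_same, one_smul]
    · intro y _ hy
      rw [Matrix.single_apply_of_ne p q (1 : F) p y (fun hc => hy hc.2.symm), zero_smul]
    · intro h; exact absurd (Finset.mem_univ q) h
  · intro x _ hx
    refine Finset.sum_eq_zero fun y _ => ?_
    rw [Matrix.single_apply_of_ne p q (1 : F) x y (fun hc => hx hc.1.symm), zero_smul]
  · intro h; exact absurd (Finset.mem_univ p) h


lemma master (b₀ : Fin n) (hb : (b₀ : ℕ) + 1 = j₁) (a b c d : Fin n)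
    (ha : (a : ℕ) + 1 ≤ i₁) (hbcol : j₁ ≤ (b : ℕ) + 1)
    (hc : (c : ℕ) + 1 ≤ i₁) (hd : j₁ ≤ (d : ℕ) + 1) :
    eU F n i₁ j₁ a b ha hbcol ⊗ₜ[F] eU F n i₁ j₁ c d hc hd
      - sigL F n i₁ j₁ b₀ hb
          (Matrix.single a b 1 * Matrix.single c d 1
            - Matrix.single c d 1 * Matrix.single a b 1)
      ∈ rkSpan F n i₁ j₁ := by
  by_cases hbc : b = c
  · subst hbc
    have hji : j₁ ≤ i₁ := le_trans hbcol hc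
    have hb0row : (b₀ : ℕ) + 1 ≤ i₁ := by rw [hb]; exact hji
    have hb0col : j₁ ≤ (b₀ : ℕ) + 1 := le_of_eq hb.symm
    by_cases hda : a = d
    · subst hda
      rw [Matrix.single_mul_single_same, Matrix.single_mul_single_same, one_mul]
      by_cases hab : a = b
      · subst hab
        rw [sub_self, map_zero]; refine sub_mem' F n i₁ j₁ _ ?_ (zero_mem _)
        exact mem_rkSpan_of_comm F n i₁ j₁ _ _ rfl
      · rw [map_sub, sigL_std, sigL_std,
          cT_pos F n i₁ j₁ b₀ hb a a ha hd hji, cT_pos F n i₁ j₁ b₀ hb b b hc hbcol hji]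
        by_cases hbb0 : b = b₀
        · subst hbb0
          have e : eU F n i₁ j₁ a b ha hbcol ⊗ₜ[F] eU F n i₁ j₁ b a hc hd
              - (eU F n i₁ j₁ a b ha hb0col ⊗ₜ[F] eU F n i₁ j₁ b a hb0row hd
                - eU F n i₁ j₁ b b hc hb0col ⊗ₜ[F] eU F n i₁ j₁ b b hb0row hbcol)
              = eU F n i₁ j₁ b b hc hb0col ⊗ₜ[F] eU F n i₁ j₁ b b hb0row hbcol := by
            rw [show eU F n i₁ j₁ a b ha hb0col = eU F n i₁ j₁ a b ha hbcol from rfl,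
              show eU F n i₁ j₁ b a hb0row hd = eU F n i₁ j₁ b a hc hd from rfl]
            abel
          rw [e]
          exact mem_rkSpan_of_comm F n i₁ j₁ _ _ rfl
        · by_cases hab0 : a = b₀
          · subst hab0
            have e : eU F n i₁ j₁ a b ha hbcol ⊗ₜ[F] eU F n i₁ j₁ b a hc hd
                - (eU F n i₁ j₁ a a ha hb0col ⊗ₜ[F] eU F n i₁ j₁ a a hb0row hd
                  - eU F n i₁ j₁ b a hc hb0col ⊗ₜ[F] eU F n i₁ j₁ a b hb0row hbcol)
                = (eU F n i₁ j₁ a b ha hbcol ⊗ₜ[F] eU F n i₁ j₁ b a hc hd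
                    + eU F n i₁ j₁ b a hc hd ⊗ₜ[F] eU F n i₁ j₁ a b ha hbcol)
                  - eU F n i₁ j₁ a a ha hb0col ⊗ₜ[F] eU F n i₁ j₁ a a hb0row hd := by
              rw [show eU F n i₁ j₁ b a hc hb0col = eU F n i₁ j₁ b a hc hd from rfl,
                show eU F n i₁ j₁ a b hb0row hbcol = eU F n i₁ j₁ a b ha hbcol from rfl]
              abel
            rw [e]
            exact sub_mem' F n i₁ j₁ _ (sym_mem_rkSpan F n i₁ j₁ _ _)
              (mem_rkSpan_of_comm F n i₁ j₁ _ _ rfl)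
          · -- all of a, b, b₀ distinct
            set A1 := eU F n i₁ j₁ b₀ a hb0row hd with hA1
            set A2 := eU F n i₁ j₁ a b ha hbcol with hA2
            set A3 := eU F n i₁ j₁ b b₀ hc hb0col with hA3
            set B1 := eU F n i₁ j₁ b₀ b hb0row hbcol with hB1
            set B2 := eU F n i₁ j₁ a b₀ ha hb0col with hB2
            set B3 := eU F n i₁ j₁ b a hc hd with hB3
            have hX : (A1 + A2 + A3) ⊗ₜ[F] (B1 + B2 + B3) ∈ rkSpan F n i₁ j₁ := by
              refine mem_rkSpan_of_comm F n i₁ j₁ _ _ ?_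
              simp only [hA1, hA2, hA3, hB1, hB2, hB3, Submodule.coe_add, coe_eU, mul_add,
                add_mul, Matrix.single_mul_single_same, one_mul,
                Matrix.single_mul_single_of_ne, hab, hab0, hbb0, Ne.symm hab, Ne.symm hab0,
                Ne.symm hbb0, ne_eq, not_false_iff]
              abel
            have e : A2 ⊗ₜ[F] B3 - (B2 ⊗ₜ[F] A1 - A3 ⊗ₜ[F] B1)
                = (A1 + A2 + A3) ⊗ₜ[F] (B1 + B2 + B3)
                  - (A1 ⊗ₜ[F] B2 + B2 ⊗ₜ[F] A1) - A1 ⊗ₜ[F] B1 - A1 ⊗ₜ[F] B3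
                  - A2 ⊗ₜ[F] B1 - A2 ⊗ₜ[F] B2 - A3 ⊗ₜ[F] B2 - A3 ⊗ₜ[F] B3 := by
              simp only [add_tmul, tmul_add]; abel
            rw [e]
            refine sub_mem' F n i₁ j₁ _ (sub_mem' F n i₁ j₁ _ (sub_mem' F n i₁ j₁ _
              (sub_mem' F n i₁ j₁ _ (sub_mem' F n i₁ j₁ _ (sub_mem' F n i₁ j₁ _
                (sub_mem' F n i₁ j₁ _ hX (sym_mem_rkSpan F n i₁ j₁ _ _)) ?_) ?_) ?_) ?_) ?_) ?_
            all_goals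
              refine mem_rkSpan_of_comm F n i₁ j₁ _ _ ?_
              simp [hA1, hA2, hA3, hB1, hB2, hB3, Matrix.single_mul_single_of_ne,
                hab, hab0, hbb0, Ne.symm hab, Ne.symm hab0, Ne.symm hbb0, ne_eq]
    · rw [Matrix.single_mul_single_same, one_mul, Matrix.single_mul_single_of_ne (h := Ne.symm hda),
        sub_zero, sigL_std, cT_pos F n i₁ j₁ b₀ hb a d ha hd hji]
      exact step_mem_rkSpan F n i₁ j₁ a b b₀ d ha hc hbcol hb0row hb0col hd (Ne.symm hda)
  · by_cases hda : a = d
    · subst hda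
      have hji : j₁ ≤ i₁ := le_trans hd ha
      have hb0row : (b₀ : ℕ) + 1 ≤ i₁ := by rw [hb]; exact hji
      have hb0col : j₁ ≤ (b₀ : ℕ) + 1 := le_of_eq hb.symm
      rw [Matrix.single_mul_single_of_ne (h := hbc), Matrix.single_mul_single_same, one_mul,
        zero_sub, map_neg, sigL_std, cT_pos F n i₁ j₁ b₀ hb c b hc hbcol hji, sub_neg_eq_add]
      have e : eU F n i₁ j₁ a b ha hbcol ⊗ₜ[F] eU F n i₁ j₁ c a hc hd
          + eU F n i₁ j₁ c b₀ hc hb0col ⊗ₜ[F] eU F n i₁ j₁ b₀ b hb0row hbcol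
          = (eU F n i₁ j₁ a b ha hbcol ⊗ₜ[F] eU F n i₁ j₁ c a hc hd
              + eU F n i₁ j₁ c a hc hd ⊗ₜ[F] eU F n i₁ j₁ a b ha hbcol)
            - (eU F n i₁ j₁ c a hc hd ⊗ₜ[F] eU F n i₁ j₁ a b ha hbcol
              - eU F n i₁ j₁ c b₀ hc hb0col ⊗ₜ[F] eU F n i₁ j₁ b₀ b hb0row hbcol) := by
        abel
      rw [e]
      exact sub_mem' F n i₁ j₁ _ (sym_mem_rkSpan F n i₁ j₁ _ _)
        (step_mem_rkSpan F n i₁ j₁ c a b₀ b hc ha hd hb0row hb0col hbcol hbc)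
    · rw [Matrix.single_mul_single_of_ne (h := hbc), Matrix.single_mul_single_of_ne (h := Ne.symm hda),
        sub_zero, map_zero]; refine sub_mem' F n i₁ j₁ _ ?_ (zero_mem _)
      refine mem_rkSpan_of_comm F n i₁ j₁ _ _ ?_
      simp [Matrix.single_mul_single_of_ne, hbc, Ne.symm hda, ne_eq]

end LadderAux

/-- The kernel of the linear map `μ : M_L ⊗ M_L → M_L` induced by the commutator
bracket is spanned by the rank-one tensors it contains. -/
theorem ker_bracket_ladderModule_spanned_by_rank_one
    (F : Type*) [Field F] (n i₁ j₁ : ℕ) (hn : 1 ≤ n)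
    (hi₁ : 1 ≤ i₁) (hi₁n : i₁ ≤ n) (hj₁ : 1 ≤ j₁) (hj₁n : j₁ ≤ n)
    (μ : ladderModule F n i₁ j₁ ⊗[F] ladderModule F n i₁ j₁ →ₗ[F] ladderModule F n i₁ j₁)
    (hμ : ∀ x y : ladderModule F n i₁ j₁,
      ((μ (x ⊗ₜ y) : Matrix (Fin n) (Fin n) F)) =
        (x : Matrix (Fin n) (Fin n) F) * y - (y : Matrix (Fin n) (Fin n) F) * x) :
    LinearMap.ker μ = Submodule.span F
      { t | ∃ x y : ladderModule F n i₁ j₁,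
        ((x : Matrix (Fin n) (Fin n) F) * y - (y : Matrix (Fin n) (Fin n) F) * x = 0) ∧
        t = x ⊗ₜ y } := by
  have hb0lt : j₁ - 1 < n := by omega
  set b₀ : Fin n := ⟨j₁ - 1, hb0lt⟩ with hb₀def
  have hb : (b₀ : ℕ) + 1 = j₁ := by
    show j₁ - 1 + 1 = j₁
    omega
  have inner : ∀ (a b : Fin n) (ha : (a : ℕ) + 1 ≤ i₁) (hbcol : j₁ ≤ (b : ℕ) + 1)
      (yv : Matrix (Fin n) (Fin n) F) (hyv : yv ∈ ladderModule F n i₁ j₁),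
      eU F n i₁ j₁ a b ha hbcol ⊗ₜ[F] (⟨yv, hyv⟩ : ladderModule F n i₁ j₁)
        - sigL F n i₁ j₁ b₀ hb
            (Matrix.single a b 1 * yv - yv * Matrix.single a b 1)
        ∈ rkSpan F n i₁ j₁ := by
    intro a b ha hbcol yv hyv
    induction hyv using Submodule.span_induction with
    | mem m hm =>
      obtain ⟨c, d, hc, hd, rfl⟩ := hm
      exact master F n i₁ j₁ b₀ hb a b c d ha hbcol hc hd
    | zero =>
      have h0 : (⟨(0 : Matrix (Fin n) (Fin n) F), Submodule.zero_mem _⟩ :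
          ladderModule F n i₁ j₁) = 0 := rfl
      rw [h0, tmul_zero, mul_zero, zero_mul, sub_zero, map_zero]
      exact sub_mem' F n i₁ j₁ _ (zero_mem _) (zero_mem _)
    | add y1 y2 h1 h2 ih1 ih2 =>
      have e1 : (⟨y1 + y2, Submodule.add_mem _ h1 h2⟩ : ladderModule F n i₁ j₁)
          = ⟨y1, h1⟩ + ⟨y2, h2⟩ := rfl
      have e2 : (Matrix.single a b 1 * y1 + Matrix.single a b 1 * y2)
          - (y1 * Matrix.single a b 1 + y2 * Matrix.single a b 1)
          = (Matrix.single a b 1 * y1 - y1 * Matrix.single a b 1)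
            + (Matrix.single a b 1 * y2 - y2 * Matrix.single a b 1) := by
        abel
      have e : eU F n i₁ j₁ a b ha hbcol ⊗ₜ[F]
            (⟨y1 + y2, Submodule.add_mem _ h1 h2⟩ : ladderModule F n i₁ j₁)
          - sigL F n i₁ j₁ b₀ hb
              (Matrix.single a b 1 * (y1 + y2)
                - (y1 + y2) * Matrix.single a b 1)
          = (eU F n i₁ j₁ a b ha hbcol ⊗ₜ[F] (⟨y1, h1⟩ : ladderModule F n i₁ j₁)
              - sigL F n i₁ j₁ b₀ hb
                  (Matrix.single a b 1 * y1 - y1 * Matrix.single a b 1))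
            + (eU F n i₁ j₁ a b ha hbcol ⊗ₜ[F] (⟨y2, h2⟩ : ladderModule F n i₁ j₁)
              - sigL F n i₁ j₁ b₀ hb
                  (Matrix.single a b 1 * y2 - y2 * Matrix.single a b 1)) := by
        rw [e1, tmul_add, mul_add, add_mul, e2, map_add]
        abel
      rw [e]
      exact add_mem ih1 ih2
    | smul r y1 h1 ih =>
      have e1 : (⟨r • y1, Submodule.smul_mem _ r h1⟩ : ladderModule F n i₁ j₁)
          = r • (⟨y1, h1⟩ : ladderModule F n i₁ j₁) := rfl
      have e : eU F n i₁ j₁ a b ha hbcol ⊗ₜ[F]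
            (⟨r • y1, Submodule.smul_mem _ r h1⟩ : ladderModule F n i₁ j₁)
          - sigL F n i₁ j₁ b₀ hb
              (Matrix.single a b 1 * (r • y1) - (r • y1) * Matrix.single a b 1)
          = r • (eU F n i₁ j₁ a b ha hbcol ⊗ₜ[F] (⟨y1, h1⟩ : ladderModule F n i₁ j₁)
              - sigL F n i₁ j₁ b₀ hb
                  (Matrix.single a b 1 * y1 - y1 * Matrix.single a b 1)) := by
        rw [e1, tmul_smul, mul_smul_comm, smul_mul_assoc, ← smul_sub, _root_.map_smul]
        module
      rw [e]
      exact Submodule.smul_mem _ _ ih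
  have claim2 : ∀ x y : ladderModule F n i₁ j₁,
      x ⊗ₜ[F] y - sigL F n i₁ j₁ b₀ hb
          ((x : Matrix (Fin n) (Fin n) F) * y - (y : Matrix (Fin n) (Fin n) F) * x)
        ∈ rkSpan F n i₁ j₁ := by
    rintro ⟨xv, hxv⟩ y
    induction hxv using Submodule.span_induction generalizing y with
    | mem m hm =>
      obtain ⟨a, b, ha, hbcol, rfl⟩ := hm
      obtain ⟨yv, hyv⟩ := y
      exact inner a b ha hbcol yv hyv
    | zero =>
      have h0 : (⟨(0 : Matrix (Fin n) (Fin n) F), Submodule.zero_mem _⟩ :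
          ladderModule F n i₁ j₁) = 0 := rfl
      rw [h0, zero_tmul]
      have h1 : ((0 : ladderModule F n i₁ j₁) : Matrix (Fin n) (Fin n) F) = 0 := rfl
      rw [h1, zero_mul, mul_zero, sub_zero, map_zero]
      exact sub_mem' F n i₁ j₁ _ (zero_mem _) (zero_mem _)
    | add x1 x2 h1 h2 ih1 ih2 =>
      have e1 : (⟨x1 + x2, Submodule.add_mem _ h1 h2⟩ : ladderModule F n i₁ j₁)
          = (⟨x1, h1⟩ : ladderModule F n i₁ j₁) + (⟨x2, h2⟩ : ladderModule F n i₁ j₁) := rfl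
      have e2 : (x1 * (y : Matrix (Fin n) (Fin n) F) + x2 * (y : Matrix (Fin n) (Fin n) F))
          - ((y : Matrix (Fin n) (Fin n) F) * x1 + (y : Matrix (Fin n) (Fin n) F) * x2)
          = (x1 * (y : Matrix (Fin n) (Fin n) F) - (y : Matrix (Fin n) (Fin n) F) * x1)
            + (x2 * (y : Matrix (Fin n) (Fin n) F) - (y : Matrix (Fin n) (Fin n) F) * x2) := by
        abel
      have e : (⟨x1 + x2, Submodule.add_mem _ h1 h2⟩ : ladderModule F n i₁ j₁) ⊗ₜ[F] y
          - sigL F n i₁ j₁ b₀ hb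
              ((x1 + x2) * (y : Matrix (Fin n) (Fin n) F)
                - (y : Matrix (Fin n) (Fin n) F) * (x1 + x2))
          = ((⟨x1, h1⟩ : ladderModule F n i₁ j₁) ⊗ₜ[F] y
              - sigL F n i₁ j₁ b₀ hb
                  (x1 * (y : Matrix (Fin n) (Fin n) F) - (y : Matrix (Fin n) (Fin n) F) * x1))
            + ((⟨x2, h2⟩ : ladderModule F n i₁ j₁) ⊗ₜ[F] y
              - sigL F n i₁ j₁ b₀ hb
                  (x2 * (y : Matrix (Fin n) (Fin n) F) - (y : Matrix (Fin n) (Fin n) F) * x2)) := by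
        rw [e1, add_tmul, add_mul, mul_add, e2, map_add]
        abel
      rw [e]
      exact add_mem (ih1 y) (ih2 y)
    | smul r x1 h1 ih =>
      have e1 : (⟨r • x1, Submodule.smul_mem _ r h1⟩ : ladderModule F n i₁ j₁)
          = r • (⟨x1, h1⟩ : ladderModule F n i₁ j₁) := rfl
      have e : (⟨r • x1, Submodule.smul_mem _ r h1⟩ : ladderModule F n i₁ j₁) ⊗ₜ[F] y
          - sigL F n i₁ j₁ b₀ hb
              ((r • x1) * (y : Matrix (Fin n) (Fin n) F)
                - (y : Matrix (Fin n) (Fin n) F) * (r • x1))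
          = r • ((⟨x1, h1⟩ : ladderModule F n i₁ j₁) ⊗ₜ[F] y
              - sigL F n i₁ j₁ b₀ hb
                  (x1 * (y : Matrix (Fin n) (Fin n) F)
                    - (y : Matrix (Fin n) (Fin n) F) * x1)) := by
        rw [e1, show (r • (⟨x1, h1⟩ : ladderModule F n i₁ j₁)) ⊗ₜ[F] y
            = r • ((⟨x1, h1⟩ : ladderModule F n i₁ j₁) ⊗ₜ[F] y)
          from TensorProduct.smul_tmul' r _ y,
          smul_mul_assoc, mul_smul_comm, ← smul_sub, _root_.map_smul]
        module
      rw [e]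
      exact Submodule.smul_mem _ _ (ih y)
  have hall : ∀ u : ladderModule F n i₁ j₁ ⊗[F] ladderModule F n i₁ j₁,
      u - sigL F n i₁ j₁ b₀ hb ((μ u : Matrix (Fin n) (Fin n) F)) ∈ rkSpan F n i₁ j₁ := by
    intro u
    have hu : u ∈ Submodule.span F {t : ladderModule F n i₁ j₁ ⊗[F] ladderModule F n i₁ j₁ |
        ∃ xx yy, xx ⊗ₜ yy = t} := by
      rw [TensorProduct.span_tmul_eq_top]; exact Submodule.mem_top
    induction hu using Submodule.span_induction with
    | mem v hv =>
      obtain ⟨x, y, rfl⟩ := hv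
      rw [hμ x y]
      exact claim2 x y
    | zero =>
      rw [map_zero, show ((0 : ladderModule F n i₁ j₁) : Matrix (Fin n) (Fin n) F) = 0 from rfl,
        map_zero]
      exact sub_mem' F n i₁ j₁ _ (zero_mem _) (zero_mem _)
    | add u v hu hv ihu ihv =>
      have e : (u + v) - sigL F n i₁ j₁ b₀ hb ((μ (u + v) : Matrix (Fin n) (Fin n) F))
          = (u - sigL F n i₁ j₁ b₀ hb ((μ u : Matrix (Fin n) (Fin n) F)))
            + (v - sigL F n i₁ j₁ b₀ hb ((μ v : Matrix (Fin n) (Fin n) F))) := by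
        rw [map_add,
          show ((μ u + μ v : ladderModule F n i₁ j₁) : Matrix (Fin n) (Fin n) F)
            = (μ u : Matrix (Fin n) (Fin n) F) + (μ v : Matrix (Fin n) (Fin n) F) from rfl,
          map_add]
        abel
      rw [e]
      exact add_mem ihu ihv
    | smul r u hu ih =>
      have e : r • u - sigL F n i₁ j₁ b₀ hb ((μ (r • u) : Matrix (Fin n) (Fin n) F))
          = r • (u - sigL F n i₁ j₁ b₀ hb ((μ u : Matrix (Fin n) (Fin n) F))) := by
        rw [_root_.map_smul,
          show ((r • μ u : ladderModule F n i₁ j₁) : Matrix (Fin n) (Fin n) F)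
            = r • (μ u : Matrix (Fin n) (Fin n) F) from rfl,
          _root_.map_smul, smul_sub]
      rw [e]
      exact Submodule.smul_mem _ _ ih
  refine le_antisymm ?_ ?_
  · intro t ht
    have h0 : μ t = 0 := LinearMap.mem_ker.mp ht
    have h2 := hall t
    rw [h0, show ((0 : ladderModule F n i₁ j₁) : Matrix (Fin n) (Fin n) F) = 0 from rfl,
      map_zero] at h2
    show t ∈ rkSpan F n i₁ j₁
    convert h2 using 1
    module
  · rw [Submodule.span_le]
    rintro t ⟨x, y, h0, rfl⟩
    have h1 : μ (x ⊗ₜ[F] y) = 0 := Subtype.ext (by rw [hμ x y, h0]; rfl)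
    simp only [SetLike.mem_coe, LinearMap.mem_ker]
    exact h1
end

section
/- Let F be a field, n a positive integer, and L a k-step ladder on n. Then M_L is closed under matrix multiplication (i.e., x, y ∈ M_L implies xy ∈ M_L) if and only if L is upper triangular. Consequently, when L is upper triangular, M_L is also closed under the commutator bracket [x,y] = xy - yx. -/
open Matrix

/-- The ladder matrices on the `k`-step ladder with steps `(ii t, jj t)` on `n`:
the span of the matrix units `e_{i,j}` (1-based) with `1 ≤ i ≤ ii t` and
`jj t ≤ j ≤ n` for some step `t`. -/
def ladderModuleK (F : Type*) [Field F] (n k : ℕ) (ii jj : Fin k → ℕ) :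
    Submodule F (Matrix (Fin n) (Fin n) F) :=
  Submodule.span F
    { A | ∃ t : Fin k, ∃ i j : Fin n, (i : ℕ) + 1 ≤ ii t ∧ jj t ≤ (j : ℕ) + 1 ∧
      A = Matrix.single i j 1 }

section Aux

variable {F : Type*} [Field F] {n k : ℕ} {ii jj : Fin k → ℕ}

lemma mem_ladderModuleK (t : Fin k) (i j : Fin n) (h1 : (i : ℕ) + 1 ≤ ii t)
    (h2 : jj t ≤ (j : ℕ) + 1) :
    Matrix.single i j (1 : F) ∈ ladderModuleK F n k ii jj :=
  Submodule.subset_span ⟨t, i, j, h1, h2, rfl⟩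

lemma entry_eq_zero_of_mem_ladderModuleK (i0 j0 : Fin n)
    (h : ∀ t : Fin k, ¬((i0 : ℕ) + 1 ≤ ii t ∧ jj t ≤ (j0 : ℕ) + 1))
    {A : Matrix (Fin n) (Fin n) F} (hA : A ∈ ladderModuleK F n k ii jj) :
    A i0 j0 = 0 := by
  let φ : Matrix (Fin n) (Fin n) F →ₗ[F] F :=
    { toFun := fun A => A i0 j0
      map_add' := fun _ _ => rfl
      map_smul' := fun _ _ => rfl }
  have hle : ladderModuleK F n k ii jj ≤ LinearMap.ker φ := by
    rw [ladderModuleK, Submodule.span_le]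
    rintro A ⟨t, i, j, h1, h2, rfl⟩
    simp only [SetLike.mem_coe, LinearMap.mem_ker]
    show Matrix.single i j (1 : F) i0 j0 = 0
    rw [Matrix.single, Matrix.of_apply]
    rw [if_neg]
    rintro ⟨rfl, rfl⟩
    exact h t ⟨h1, h2⟩
  exact LinearMap.mem_ker.mp (hle hA)

lemma ladderModuleK_closed_of_ut (hiimono : StrictMono ii) (hjjmono : StrictMono jj)
    (hut : ∀ s t : Fin k, (s : ℕ) + 1 = (t : ℕ) → ii s < jj t) :
    ∀ x ∈ ladderModuleK F n k ii jj, ∀ y ∈ ladderModuleK F n k ii jj,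
      x * y ∈ ladderModuleK F n k ii jj := by
  intro x hx y hy
  have h1 : x * y ∈ ladderModuleK F n k ii jj * ladderModuleK F n k ii jj :=
    Submodule.mul_mem_mul hx hy
  have h2 : ladderModuleK F n k ii jj * ladderModuleK F n k ii jj ≤
      ladderModuleK F n k ii jj := by
    rw [ladderModuleK, Submodule.span_mul_span, Submodule.span_le]
    rintro z ⟨a, ⟨s, i, j, hi, hj, rfl⟩, b, ⟨t, i', j', hi', hj', rfl⟩, rfl⟩
    beta_reduce
    by_cases hji : j = i'
    · subst hji
      rw [Matrix.single_mul_single_same, one_mul]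
      by_cases hst : s ≤ t
      · exact mem_ladderModuleK s i j' hi (le_trans (hjjmono.monotone hst) hj')
      · exfalso
        push_neg at hst
        have hts : (t : ℕ) < (s : ℕ) := hst
        have ht1 : (t : ℕ) + 1 < k := by omega
        set t' : Fin k := ⟨(t : ℕ) + 1, ht1⟩ with ht'
        have h3 : ii t < jj t' := hut t t' rfl
        have h4 : jj t' ≤ jj s := hjjmono.monotone (by
          show (t' : ℕ) ≤ (s : ℕ)
          simp [ht']
          omega)
        -- jj s ≤ j + 1 and j + 1 ≤ ii t
        omega
    · rw [Matrix.single_mul_single_of_ne (h := hji)]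
      exact Submodule.zero_mem _
  exact h2 h1

end Aux

/-- The ladder matrix space `M_L` of a `k`-step ladder `L` is closed under matrix
multiplication if and only if the ladder is upper triangular (`i_t < j_{t+1}` for
all consecutive steps); consequently, when `L` is upper triangular, `M_L` is also
closed under the commutator bracket. -/
theorem ladderModuleK_mul_closed_iff_upper_triangular
    (F : Type*) [Field F] (n k : ℕ) (hn : 1 ≤ n) (ii jj : Fin k → ℕ)
    (hiimono : StrictMono ii) (hjjmono : StrictMono jj)
    (hii1 : ∀ t, 1 ≤ ii t) (hiin : ∀ t, ii t ≤ n)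
    (hjj1 : ∀ t, 1 ≤ jj t) (hjjn : ∀ t, jj t ≤ n) :
    ((∀ x ∈ ladderModuleK F n k ii jj, ∀ y ∈ ladderModuleK F n k ii jj,
        x * y ∈ ladderModuleK F n k ii jj)
      ↔ (∀ s t : Fin k, (s : ℕ) + 1 = (t : ℕ) → ii s < jj t))
    ∧ ((∀ s t : Fin k, (s : ℕ) + 1 = (t : ℕ) → ii s < jj t) →
        ∀ x ∈ ladderModuleK F n k ii jj, ∀ y ∈ ladderModuleK F n k ii jj,
          x * y - y * x ∈ ladderModuleK F n k ii jj) := by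
  constructor
  · constructor
    · intro hc s t hst
      by_contra hlt
      push_neg at hlt
      -- hlt : jj t ≤ ii s
      have hst' : (s : ℕ) < (t : ℕ) := by omega
      set i1 : Fin n := ⟨ii t - 1, by have := hiin t; have := hii1 t; omega⟩ with hi1
      set c : Fin n := ⟨jj t - 1, by have := hjjn t; have := hjj1 t; omega⟩ with hc'
      set j2 : Fin n := ⟨jj s - 1, by have := hjjn s; have := hjj1 s; omega⟩ with hj2
      have hi1v : (i1 : ℕ) + 1 = ii t := by simp [hi1]; have := hii1 t; omega
      have hcv : (c : ℕ) + 1 = jj t := by simp [hc']; have := hjj1 t; omega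
      have hj2v : (j2 : ℕ) + 1 = jj s := by simp [hj2]; have := hjj1 s; omega
      have hx : Matrix.single i1 c (1 : F) ∈ ladderModuleK F n k ii jj :=
        mem_ladderModuleK t i1 c (by omega) (by omega)
      have hy : Matrix.single c j2 (1 : F) ∈ ladderModuleK F n k ii jj :=
        mem_ladderModuleK s c j2 (by omega) (by omega)
      have hprod := hc _ hx _ hy
      rw [Matrix.single_mul_single_same, one_mul] at hprod
      have hzero : Matrix.single i1 j2 (1 : F) i1 j2 = 0 := by
        refine entry_eq_zero_of_mem_ladderModuleK i1 j2 ?_ hprod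
        rintro u ⟨hu1, hu2⟩
        -- ii t ≤ ii u, jj u ≤ jj s
        have h5 : t ≤ u := by
          by_contra h
          push_neg at h
          exact absurd hu1 (by rw [hi1v]; exact not_le.mpr (hiimono h))
        have h6 : u ≤ s := by
          by_contra h
          push_neg at h
          exact absurd hu2 (by rw [hj2v] at hu2 ⊢; exact not_le.mpr (hjjmono h))
        have : (t : ℕ) ≤ (s : ℕ) := le_trans (Fin.le_def.mp h5) (Fin.le_def.mp h6)
        omega
      rw [Matrix.single_apply_same] at hzero
      exact one_ne_zero hzero
    · exact ladderModuleK_closed_of_ut hiimono hjjmono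
  · intro hut x hx y hy
    exact Submodule.sub_mem _
      (ladderModuleK_closed_of_ut hiimono hjjmono hut x hx y hy)
      (ladderModuleK_closed_of_ut hiimono hjjmono hut y hy x hx)
end

section
/- Let F be a field and n a positive integer. The full matrix algebra M_n(F), considered as a Lie algebra under the commutator bracket [x,y] = xy - yx, is zero product determined: for every F-vector space X and every bilinear map φ : M_n(F) × M_n(F) → X satisfying φ(x,y) = 0 whenever [x,y] = 0, there exists an F-linear map f : M_n(F) → X such that φ(x,y) = f([x,y]) for all x, y ∈ M_n(F). -/
open Matrix

/-- The full matrix algebra `M_n(F)`, as a Lie algebra under the commutator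
bracket, is zero product determined. -/
theorem matrix_lie_zero_product_determined
    (F : Type*) [Field F] (n : ℕ) (hn : 1 ≤ n)
    (X : Type*) [AddCommGroup X] [Module F X]
    (φ : Matrix (Fin n) (Fin n) F →ₗ[F] Matrix (Fin n) (Fin n) F →ₗ[F] X)
    (hφ : ∀ x y : Matrix (Fin n) (Fin n) F, x * y - y * x = 0 → φ x y = 0) :
    ∃ f : Matrix (Fin n) (Fin n) F →ₗ[F] X,
      ∀ x y : Matrix (Fin n) (Fin n) F, φ x y = f (x * y - y * x) := by
  classical
  set E : Fin n → Fin n → Matrix (Fin n) (Fin n) F :=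
    fun i j => Matrix.single i j (1 : F) with hEdef
  have hmul : ∀ i j k l : Fin n, E i j * E k l = if j = k then E i l else 0 := by
    intro i j k l
    by_cases h : j = k
    · subst h; simp [hEdef]
    · rw [if_neg h]
      simp only [hEdef]
      exact Matrix.single_mul_single_of_ne 1 i j k h 1
  have hφ' : ∀ x y, x * y = y * x → φ x y = 0 := fun x y h =>
    hφ x y (by rw [h, sub_self])
  have h0 : ∀ z : Matrix (Fin n) (Fin n) F, φ z z = 0 := fun z => hφ' z z rfl
  have hskew : ∀ x y, φ y x = - φ x y := by
    intro x y
    have h2 := h0 (x + y)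
    simp only [map_add, LinearMap.add_apply, h0 x, h0 y, zero_add, add_zero] at h2
    rw [← sub_eq_zero, ← h2]
    abel
  -- commuting matrix units give zero
  have hc : ∀ i j k l : Fin n, j ≠ k → l ≠ i → φ (E i j) (E k l) = 0 := by
    intro i j k l h1 h2
    apply hφ'
    rw [hmul, hmul, if_neg h1, if_neg h2]
  -- Lemma L1
  have L1 : ∀ i j l : Fin n, i ≠ l → φ (E i j) (E j l) = φ (E i l) (E l l) := by
    intro i j l hil
    by_cases hjl : j = l
    · rw [hjl]
    by_cases hji : j = i
    · rw [hji]
      have hil' : i ≠ l := fun h => hil h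
      have hcomm : (E i i + E l l) * E i l = E i l * (E i i + E l l) := by
        simp [add_mul, mul_add, hmul, hil, Ne.symm hil]
      have h3 := hφ' _ _ hcomm
      simp only [map_add, LinearMap.add_apply] at h3
      rw [hskew (E l l) (E i l)]
      rw [← sub_eq_zero, ← h3]
      abel
    · -- i, j, l pairwise distinct
      have hcomm : (E i j + E i l) * (E j l - E l l) = (E j l - E l l) * (E i j + E i l) := by
        simp [add_mul, mul_add, mul_sub, sub_mul, hmul, hjl, Ne.symm hjl, Ne.symm hil]
      have h3 := hφ' _ _ hcomm
      simp only [map_add, map_sub, LinearMap.add_apply, LinearMap.sub_apply] at h3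
      rw [hc i j l l hjl (Ne.symm hil),
        hc i l j l (fun h : l = j => hjl h.symm) (Ne.symm hil)] at h3
      simp only [sub_zero, zero_sub, add_zero, zero_add] at h3
      rw [← sub_eq_zero, ← h3]
      try abel
  -- the distinguished index
  set o : Fin n := ⟨0, hn⟩ with ho
  -- Lemma L2 : cyclic relation for pairwise distinct i, j, o
  have L2 : ∀ i j : Fin n, i ≠ j → i ≠ o → j ≠ o →
      φ (E i j) (E j i) + φ (E j o) (E o j) + φ (E o i) (E i o) = 0 := by
    intro i j hij hio hjo
    have hcomm : (E i j + E j o + E o i) * (E j i + E o j + E i o)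
        = (E j i + E o j + E i o) * (E i j + E j o + E o i) := by
      simp only [add_mul, mul_add, hmul]
      simp [hij, Ne.symm hij, hio, Ne.symm hio, hjo, Ne.symm hjo]
      abel
    have h3 := hφ' _ _ hcomm
    simp only [map_add, LinearMap.add_apply] at h3
    rw [hc i j o j hjo (Ne.symm hij), hc i j i o (Ne.symm hij) (Ne.symm hio),
      hc j o j i (Ne.symm hjo) hij, hc j o i o (Ne.symm hio) (Ne.symm hjo),
      hc o i j i hij hio, hc o i o j hio hjo] at h3
    simp only [add_zero, zero_add] at h3
    rw [← h3]
    try abel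
  -- define f on the basis
  set g : Fin n × Fin n → X := fun p =>
    if p.1 = p.2 then (if p.1 = o then 0 else φ (E p.1 o) (E o p.1))
    else φ (E p.1 p.2) (E p.2 p.2) with hg
  set b := Matrix.stdBasis F (Fin n) (Fin n) with hb
  refine ⟨b.constr F g, ?_⟩
  have hbE : ∀ i j : Fin n, b (i, j) = E i j := by
    intro i j
    simp only [hb, hEdef, Matrix.stdBasis_eq_single]
  have hf : ∀ i j : Fin n, (b.constr F g) (E i j) = g (i, j) := by
    intro i j
    rw [← hbE, Module.Basis.constr_basis]
  -- diagonal lemma L3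
  have L3 : ∀ i j : Fin n, i ≠ j → φ (E i j) (E j i) = g (i, i) - g (j, j) := by
    intro i j hij
    by_cases hio : i = o
    · rw [hio]
      have hjo : j ≠ o := fun h => hij (hio.trans h.symm)
      simp only [hg, if_pos rfl, hjo, if_neg hjo, ite_true, ite_false]
      rw [hskew (E j o) (E o j)]
      abel
    · by_cases hjo : j = o
      · rw [hjo]
        simp only [hg, if_pos rfl, if_neg hio, ite_true, ite_false]
        abel
      · have h3 := L2 i j hij hio hjo
        simp only [hg, if_pos rfl, if_neg hio, if_neg hjo, ite_true, ite_false]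
        rw [hskew (E i o) (E o i)] at h3
        rw [← sub_eq_zero, ← h3]
        abel
  -- the key computation on basis pairs
  have key : ∀ i j k l : Fin n,
      φ (E i j) (E k l) = (b.constr F g) (E i j * E k l - E k l * E i j) := by
    intro i j k l
    rcases eq_or_ne j k with hjk | hjk
    · rw [← hjk]
      rcases eq_or_ne l i with hli | hli
      · rw [hli]
        rcases eq_or_ne i j with hij | hij
        · rw [hij, h0, hmul, if_pos rfl, sub_self, map_zero]
        · rw [hmul, hmul, if_pos rfl, if_pos rfl, map_sub, hf, hf]
          exact L3 i j hij
      · rw [hmul, hmul, if_pos rfl, if_neg hli, sub_zero, hf]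
        have hil : i ≠ l := Ne.symm hli
        rw [L1 i j l hil]
        simp [hg, hil]
    · rcases eq_or_ne l i with hli | hli
      · rw [hli]
        rw [hmul, hmul, if_neg hjk, if_pos rfl, zero_sub, map_neg, hf]
        have hkj : k ≠ j := Ne.symm hjk
        rw [hskew (E k i) (E i j), L1 k i j hkj]
        simp [hg, hkj]
      · rw [hc i j k l hjk hli, hmul, hmul, if_neg hjk, if_neg hli, sub_self, map_zero]
  -- conclude by bilinearity
  intro x y
  have hB : φ = ((LinearMap.mul F (Matrix (Fin n) (Fin n) F)
      - (LinearMap.mul F (Matrix (Fin n) (Fin n) F)).flip).compr₂ (b.constr F g)) := by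
    apply LinearMap.ext_basis b b
    rintro ⟨i, j⟩ ⟨k, l⟩
    rw [hbE, hbE, key]
    simp [LinearMap.compr₂_apply, LinearMap.sub_apply, LinearMap.mul_apply',
      LinearMap.flip_apply]
  rw [hB]
  simp [LinearMap.compr₂_apply, LinearMap.sub_apply, LinearMap.mul_apply',
    LinearMap.flip_apply]
end

section
/- Let F be a field and n a positive integer. The full matrix algebra M_n(F), considered as an associative algebra under matrix multiplication, is zero product determined: for every F-vector space X and every bilinear map φ : M_n(F) × M_n(F) → X satisfying φ(x,y) = 0 whenever xy = 0, there exists an F-linear map f : M_n(F) → X such that φ(x,y) = f(xy) for all x, y ∈ M_n(F). -/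
open Matrix

/-- The full matrix algebra `M_n(F)`, as an associative algebra under matrix
multiplication, is zero product determined. -/
theorem matrix_mul_zero_product_determined
    (F : Type*) [Field F] (n : ℕ) (hn : 1 ≤ n)
    (X : Type*) [AddCommGroup X] [Module F X]
    (φ : Matrix (Fin n) (Fin n) F →ₗ[F] Matrix (Fin n) (Fin n) F →ₗ[F] X)
    (hφ : ∀ x y : Matrix (Fin n) (Fin n) F, x * y = 0 → φ x y = 0) :
    ∃ f : Matrix (Fin n) (Fin n) F →ₗ[F] X,
      ∀ x y : Matrix (Fin n) (Fin n) F, φ x y = f (x * y) := by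
  classical
  -- Key: for idempotent `e`, `φ (x*e) y = φ x (e*y)`.
  have key : ∀ e : Matrix (Fin n) (Fin n) F, e * e = e →
      ∀ x y, φ (x * e) y = φ x (e * y) := by
    intro e he x y
    have h1 : φ (x * e) y = φ (x * e) (e * y) := by
      have h0 : (x * e) * (y - e * y) = 0 := by
        rw [mul_sub, mul_assoc x e (e * y), ← mul_assoc e e y, he, mul_assoc x e y, sub_self]
      have := hφ _ _ h0
      rw [map_sub, sub_eq_zero] at this
      exact this
    have h2 : φ x (e * y) = φ (x * e) (e * y) := by
      have h0 : (x - x * e) * (e * y) = 0 := by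
        rw [sub_mul, mul_assoc x e (e * y), ← mul_assoc e e y, he, sub_self]
      have := hφ _ _ h0
      rw [map_sub, LinearMap.sub_apply, sub_eq_zero] at this
      exact this
    rw [h1, h2]
  -- The property extends to all matrices since std basis matrices are
  -- differences of idempotents.
  have main : ∀ a : Matrix (Fin n) (Fin n) F,
      ∀ x y, φ (x * a) y = φ x (a * y) := by
    intro a
    induction a using Matrix.induction_on' with
    | h_zero => intro x y; simp
    | h_add p q hp hq =>
      intro x y
      simp only [mul_add, add_mul, map_add, LinearMap.add_apply, hp x y, hq x y]
    | h_std_basis i j c =>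
      have hE : ∀ i j : Fin n, ∀ x y,
          φ (x * Matrix.single i j (1 : F)) y = φ x (Matrix.single i j 1 * y) := by
        intro i j x y
        by_cases hij : i = j
        · subst hij
          exact key _ (by rw [single_mul_single_same, one_mul]) x y
        · have hji : j ≠ i := fun h => hij h.symm
          have h1 : (Matrix.single i i (1 : F)) * Matrix.single i i 1 =
              Matrix.single i i 1 := by rw [single_mul_single_same, one_mul]
          have h2 : (Matrix.single i i (1 : F) + Matrix.single i j 1) *
              (Matrix.single i i 1 + Matrix.single i j 1) =
              Matrix.single i i 1 + Matrix.single i j 1 := by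
            rw [add_mul, mul_add, mul_add, single_mul_single_same,
              single_mul_single_same, single_mul_single_of_ne (h := hji),
              single_mul_single_of_ne (h := hji)]
            simp
          have k1 := key _ h1 x y
          have k2 := key _ h2 x y
          have hsub : Matrix.single i j (1 : F) =
              (Matrix.single i i 1 + Matrix.single i j 1) - Matrix.single i i 1 := by
            rw [add_sub_cancel_left]
          rw [hsub]
          simp only [mul_sub, sub_mul, map_sub, LinearMap.sub_apply, k1, k2]
      intro x y
      have hc : Matrix.single i j c = c • Matrix.single i j (1 : F) := by
        rw [smul_single, smul_eq_mul, mul_one]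
      rw [hc, mul_smul_comm, smul_mul_assoc, _root_.map_smul, _root_.map_smul,
        LinearMap.smul_apply, hE i j x y]
  refine ⟨φ.flip 1, fun x y => ?_⟩
  have := main y x 1
  rw [mul_one] at this
  simpa [LinearMap.flip_apply] using this.symm
end

section
/- Let F be a field, n a positive integer, and L an upper triangular k-step ladder on n. Then the ladder matrix algebra M_L, considered under matrix multiplication, is zero product determined: for every F-vector space X and every bilinear map φ : M_L × M_L → X satisfying φ(x,y) = 0 whenever xy = 0, there exists an F-linear map f : M_L → X such that φ(x,y) = f(xy) for all x, y ∈ M_L. -/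
open Matrix

/-- The ladder membership predicate for a matrix position. -/
def ladderP (n k : ℕ) (ii jj : Fin k → ℕ) (i j : Fin n) : Prop :=
  ∃ t : Fin k, (i : ℕ) + 1 ≤ ii t ∧ jj t ≤ (j : ℕ) + 1

lemma mem_ladder (F : Type*) [Field F] {n k : ℕ} {ii jj : Fin k → ℕ} {i j : Fin n}
    (h : ladderP n k ii jj i j) :
    Matrix.single i j (1 : F) ∈ ladderModuleK F n k ii jj :=
  Submodule.subset_span ⟨h.choose, i, j, h.choose_spec.1, h.choose_spec.2, rfl⟩

lemma ladderP_trans {n k : ℕ} {ii jj : Fin k → ℕ}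
    (hiimono : StrictMono ii) (hjjmono : StrictMono jj)
    (hut : ∀ s t : Fin k, (s : ℕ) + 1 = (t : ℕ) → ii s < jj t)
    {i j l : Fin n} (h1 : ladderP n k ii jj i j) (h2 : ladderP n k ii jj j l) :
    ladderP n k ii jj i l := by
  obtain ⟨s, hs1, hs2⟩ := h1
  obtain ⟨t, ht1, ht2⟩ := h2
  refine ⟨t, ?_, ht2⟩
  rcases le_or_gt s t with hst | hst
  · exact le_trans hs1 (hiimono.monotone hst)
  · exfalso
    have hk : (t : ℕ) + 1 < k := lt_of_le_of_lt (Nat.succ_le_of_lt hst) s.isLt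
    set t' : Fin k := ⟨(t : ℕ) + 1, hk⟩ with ht'
    have h1 : ii t < jj t' := hut t t' rfl
    have h2 : jj t' ≤ jj s := hjjmono.monotone (by simp [ht', Fin.le_def, Nat.succ_le_of_lt hst])
    omega

lemma ladder_mul_mem (F : Type*) [Field F] {n k : ℕ} {ii jj : Fin k → ℕ}
    (hiimono : StrictMono ii) (hjjmono : StrictMono jj)
    (hut : ∀ s t : Fin k, (s : ℕ) + 1 = (t : ℕ) → ii s < jj t)
    {a b : Matrix (Fin n) (Fin n) F}
    (ha : a ∈ ladderModuleK F n k ii jj) (hb : b ∈ ladderModuleK F n k ii jj) :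
    a * b ∈ ladderModuleK F n k ii jj := by
  classical
  induction ha using Submodule.span_induction with
  | mem x hx =>
    induction hb using Submodule.span_induction with
    | mem y hy =>
      obtain ⟨s, i, j, hs1, hs2, rfl⟩ := hx
      obtain ⟨t, p, q, ht1, ht2, rfl⟩ := hy
      by_cases hjp : j = p
      · subst hjp
        rw [Matrix.single_mul_single_same, one_mul]
        exact mem_ladder F (ladderP_trans hiimono hjjmono hut ⟨s, hs1, hs2⟩ ⟨t, ht1, ht2⟩)
      · rw [Matrix.single_mul_single_of_ne (h := hjp) (d := 1)]
        exact Submodule.zero_mem _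
    | zero => rw [mul_zero]; exact Submodule.zero_mem _
    | add y z _ _ hy hz => rw [mul_add]; exact Submodule.add_mem _ hy hz
    | smul c y _ hy => rw [mul_smul_comm]; exact Submodule.smul_mem _ c hy
  | zero => rw [zero_mul]; exact Submodule.zero_mem _
  | add x y _ _ hx hy => rw [add_mul]; exact Submodule.add_mem _ hx hy
  | smul c x _ hx => rw [smul_mul_assoc]; exact Submodule.smul_mem _ c hx

/-- The matrix algebra on an upper triangular `k`-step ladder is zero product
determined under matrix multiplication. -/
theorem ladderModuleK_zero_product_determined_mul
    (F : Type*) [Field F] (n k : ℕ) (hn : 1 ≤ n) (ii jj : Fin k → ℕ)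
    (hiimono : StrictMono ii) (hjjmono : StrictMono jj)
    (hii1 : ∀ t, 1 ≤ ii t) (hiin : ∀ t, ii t ≤ n)
    (hjj1 : ∀ t, 1 ≤ jj t) (hjjn : ∀ t, jj t ≤ n)
    (hut : ∀ s t : Fin k, (s : ℕ) + 1 = (t : ℕ) → ii s < jj t)
    (X : Type*) [AddCommGroup X] [Module F X]
    (φ : ladderModuleK F n k ii jj →ₗ[F] ladderModuleK F n k ii jj →ₗ[F] X)
    (hφ : ∀ x y : ladderModuleK F n k ii jj,
      ((x : Matrix (Fin n) (Fin n) F) * y = 0) → φ x y = 0) :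
    ∃ f : ladderModuleK F n k ii jj →ₗ[F] X,
      ∀ x y z : ladderModuleK F n k ii jj,
        (z : Matrix (Fin n) (Fin n) F) = (x : Matrix (Fin n) (Fin n) F) * y →
          φ x y = f z := by
  classical
  -- the multiplication as a bilinear map on L
  let mul2 : ladderModuleK F n k ii jj →ₗ[F] ladderModuleK F n k ii jj →ₗ[F] ladderModuleK F n k ii jj := LinearMap.mk₂ F
    (fun x y => ⟨(x : Matrix (Fin n) (Fin n) F) * y,
      ladder_mul_mem F hiimono hjjmono hut x.2 y.2⟩)
    (fun a b c => Subtype.ext (by simp [add_mul]))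
    (fun c a b => Subtype.ext (by simp [smul_mul_assoc]))
    (fun a b c => Subtype.ext (by simp [mul_add]))
    (fun c a b => Subtype.ext (by simp [mul_smul_comm]))
  have mul2_coe : ∀ x y : ladderModuleK F n k ii jj,
      ((mul2 x y : ladderModuleK F n k ii jj) : Matrix (Fin n) (Fin n) F) = (x : Matrix (Fin n) (Fin n) F) * y :=
    fun x y => rfl
  -- a basis of ladderModuleK F n k ii jj indexed by the ladder positions
  let S' := {p : Fin n × Fin n // ladderP n k ii jj p.1 p.2}
  let v : S' → Matrix (Fin n) (Fin n) F := fun p => Matrix.single p.1.1 p.1.2 1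
  have hli : LinearIndependent F v := by
    have hv : v = fun p : S' => Matrix.stdBasis F (Fin n) (Fin n) p.1 := by
      funext p; rw [Matrix.stdBasis_eq_single]
    rw [hv]
    exact (Matrix.stdBasis F (Fin n) (Fin n)).linearIndependent.comp Subtype.val
      Subtype.val_injective
  have hspan : Submodule.span F (Set.range v) = ladderModuleK F n k ii jj := by
    rw [ladderModuleK]
    congr 1
    ext A
    constructor
    · rintro ⟨p, rfl⟩
      obtain ⟨t, h1, h2⟩ := p.2
      exact ⟨t, p.1.1, p.1.2, h1, h2, rfl⟩
    · rintro ⟨t, i, j, h1, h2, rfl⟩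
      exact ⟨⟨(i, j), ⟨t, h1, h2⟩⟩, rfl⟩
  let b : Module.Basis S' F (ladderModuleK F n k ii jj) := (Module.Basis.span hli).map (LinearEquiv.ofEq _ _ hspan)
  have hb : ∀ p : S', ((b p : ladderModuleK F n k ii jj) : Matrix (Fin n) (Fin n) F) = v p := by
    intro p
    show ((LinearEquiv.ofEq _ _ hspan) (Module.Basis.span hli p) : Matrix (Fin n) (Fin n) F) = v p
    rw [LinearEquiv.coe_ofEq_apply]
    exact congrArg Subtype.val (Module.Basis.span_apply hli p)
  -- the values of f on the basis
  let vals : S' → X := fun p =>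
    if h : ∃ m : Fin n, ladderP n k ii jj p.1.1 m ∧ ladderP n k ii jj m p.1.2 then
      φ ⟨_, mem_ladder F h.choose_spec.1⟩ ⟨_, mem_ladder F h.choose_spec.2⟩
    else 0
  let f : ladderModuleK F n k ii jj →ₗ[F] X := b.constr F vals
  -- the key exchange lemma
  have hswap : ∀ (i l m m' : Fin n) (h1 : ladderP n k ii jj i m) (h2 : ladderP n k ii jj m l)
      (h3 : ladderP n k ii jj i m') (h4 : ladderP n k ii jj m' l),
      φ ⟨_, mem_ladder F h1⟩ ⟨_, mem_ladder F h2⟩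
        = φ ⟨_, mem_ladder F h3⟩ ⟨_, mem_ladder F h4⟩ := by
    intro i l m m' h1 h2 h3 h4
    by_cases hmm : m = m'
    · subst hmm; rfl
    · have hc1 : φ ⟨_, mem_ladder F h1⟩ ⟨_, mem_ladder F h4⟩ = 0 :=
        hφ _ _ (Matrix.single_mul_single_of_ne _ _ _ _ hmm 1)
      have hc2 : φ ⟨_, mem_ladder F h3⟩ ⟨_, mem_ladder F h2⟩ = 0 :=
        hφ _ _ (Matrix.single_mul_single_of_ne _ _ _ _ (Ne.symm hmm) 1)
      have hz : φ (⟨_, mem_ladder F h1⟩ - ⟨_, mem_ladder F h3⟩)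
          (⟨_, mem_ladder F h2⟩ + ⟨_, mem_ladder F h4⟩) = 0 := by
        apply hφ
        show (Matrix.single i m (1 : F) - Matrix.single i m' 1)
            * (Matrix.single m l 1 + Matrix.single m' l 1) = 0
        rw [sub_mul, mul_add, mul_add, Matrix.single_mul_single_same,
          Matrix.single_mul_single_same, Matrix.single_mul_single_of_ne (h := hmm) (d := 1),
          Matrix.single_mul_single_of_ne (h := (Ne.symm hmm)) (d := 1)]
        simp
      simp only [map_sub, map_add, LinearMap.sub_apply, LinearMap.add_apply,
        hc1, hc2, add_zero, zero_add] at hz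
      rw [sub_zero, zero_sub, ← sub_eq_add_neg] at hz
      exact sub_eq_zero.mp hz
  have hmain : φ = mul2.compr₂ f := by
    apply LinearMap.ext_basis b b
    intro p q
    rw [LinearMap.compr₂_apply]
    by_cases hpq : p.1.2 = q.1.1
    · have h2 : ladderP n k ii jj p.1.2 q.1.2 := by rw [hpq]; exact q.2
      have hr : ladderP n k ii jj p.1.1 q.1.2 :=
        ladderP_trans hiimono hjjmono hut p.2 h2
      have hbp : b p = ⟨_, mem_ladder F p.2⟩ := Subtype.ext (hb p)
      have hbq : b q = ⟨_, mem_ladder F h2⟩ := by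
        apply Subtype.ext
        rw [hb]
        show v q = Matrix.single p.1.2 q.1.2 (1 : F)
        rw [hpq]
      have hbr : mul2 (b p) (b q) = b ⟨(p.1.1, q.1.2), hr⟩ := by
        apply Subtype.ext
        rw [mul2_coe, hb, hb, hb]
        show v p * v q = Matrix.single p.1.1 q.1.2 (1 : F)
        show Matrix.single p.1.1 p.1.2 (1 : F) * Matrix.single q.1.1 q.1.2 1 = _
        rw [← hpq, Matrix.single_mul_single_same, one_mul]
      rw [hbr, Module.Basis.constr_basis]
      have hex : ∃ m : Fin n, ladderP n k ii jj p.1.1 m ∧ ladderP n k ii jj m q.1.2 :=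
        ⟨p.1.2, p.2, h2⟩
      show φ (b p) (b q) = vals ⟨(p.1.1, q.1.2), hr⟩
      rw [hbp, hbq]
      show _ = dite _ _ _
      rw [dif_pos hex]
      exact hswap _ _ _ _ p.2 h2 hex.choose_spec.1 hex.choose_spec.2
    · have h0 : mul2 (b p) (b q) = 0 := by
        apply Subtype.ext
        rw [mul2_coe, hb, hb]
        exact Matrix.single_mul_single_of_ne _ _ _ _ hpq 1
      rw [h0, map_zero]
      apply hφ
      rw [hb, hb]
      exact Matrix.single_mul_single_of_ne _ _ _ _ hpq 1
  refine ⟨f, fun x y z hz => ?_⟩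
  have hzz : z = mul2 x y := Subtype.ext hz
  rw [hzz, hmain]
  rfl
end

section
/- Let F be a field, n a positive integer, and L = {(i₁, j₁)} a 1-step ladder on n with i₁ ≥ j₁. Set n₁ = j₁ - 1, n₂ = i₁ - j₁ + 1, n₃ = n - i₁. Let μ : M_L ⊗_F M_L → M_L be the linear map induced by (x,y) ↦ [x,y] = xy - yx. Then the dimension of Ker μ over F equals n₁²n₂² + 2n₁²n₂n₃ + n₁²n₃² + 2n₁n₂³ + 4n₁n₂²n₃ + 2n₁n₂n₃² - n₁n₂ - n₁n₃ + n₂⁴ + 2n₂³n₃ + n₂²n₃² - n₂² - n₂n₃ + 1. -/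
open Matrix TensorProduct

set_option synthInstance.maxHeartbeats 1000000
set_option maxHeartbeats 2000000

/-- The dimension (`Cardinal.toNat` of the `Module.rank`, i.e. the finrank) of the
kernel of the bracket-induced map `μ : M_L ⊗ M_L → M_L` for a one-step ladder with
`i₁ ≥ j₁`, where `n₁ = j₁ - 1`, `n₂ = i₁ - j₁ + 1`, `n₃ = n - i₁`. -/
theorem ker_bracket_ladderModule_finrank
    (F : Type*) [Field F] (n i₁ j₁ : ℕ) (hn : 1 ≤ n)
    (hi₁ : 1 ≤ i₁) (hi₁n : i₁ ≤ n) (hj₁ : 1 ≤ j₁) (hj₁n : j₁ ≤ n) (hij : j₁ ≤ i₁)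
    (n₁ n₂ n₃ : ℕ) (hn₁ : n₁ + 1 = j₁) (hn₂ : n₂ + j₁ = i₁ + 1) (hn₃ : n₃ + i₁ = n)
    (μ : ladderModule F n i₁ j₁ ⊗[F] ladderModule F n i₁ j₁ →ₗ[F] ladderModule F n i₁ j₁)
    (hμ : ∀ x y : ladderModule F n i₁ j₁,
      ((μ (x ⊗ₜ y) : Matrix (Fin n) (Fin n) F)) =
        (x : Matrix (Fin n) (Fin n) F) * y - (y : Matrix (Fin n) (Fin n) F) * x) :
    (Cardinal.toNat (Module.rank F ↥(LinearMap.ker μ)) : ℤ) =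
      (n₁ : ℤ) ^ 2 * n₂ ^ 2 + 2 * n₁ ^ 2 * n₂ * n₃ + n₁ ^ 2 * n₃ ^ 2
        + 2 * n₁ * n₂ ^ 3 + 4 * n₁ * n₂ ^ 2 * n₃ + 2 * n₁ * n₂ * n₃ ^ 2
        - n₁ * n₂ - n₁ * n₃
        + n₂ ^ 4 + 2 * n₂ ^ 3 * n₃ + n₂ ^ 2 * n₃ ^ 2 - n₂ ^ 2 - n₂ * n₃ + 1 := by
  classical
  have hkn : n₁ < n := by omega
  set k : Fin n := ⟨n₁, hkn⟩ with hkdef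
  have hmem : ∀ i j : Fin n, (i : ℕ) + 1 ≤ i₁ → j₁ ≤ (j : ℕ) + 1 →
      Matrix.single i j (1 : F) ∈ ladderModule F n i₁ j₁ := fun i j h1 h2 =>
    Submodule.subset_span ⟨i, j, h1, h2, rfl⟩
  -- linear independence of families of distinct matrix units
  have hsb : LinearIndependent F
      (fun q : Fin n × Fin n => Matrix.single q.1 q.2 (1 : F)) := by
    have h := (Matrix.stdBasis F (Fin n) (Fin n)).linearIndependent
    have he : (fun q : Fin n × Fin n => Matrix.single q.1 q.2 (1 : F)) =
        ⇑(Matrix.stdBasis F (Fin n) (Fin n)) := by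
      funext q
      rw [show q = (q.1, q.2) from rfl, Matrix.stdBasis_eq_single]
    rwa [he]
  -- the basis of the ladder module
  set ι := {p : Fin n × Fin n // (p.1 : ℕ) + 1 ≤ i₁ ∧ j₁ ≤ (p.2 : ℕ) + 1} with hιdef
  set b : ι → ladderModule F n i₁ j₁ := fun p => ⟨Matrix.single p.1.1 p.1.2 1,
    hmem p.1.1 p.1.2 p.2.1 p.2.2⟩ with hbdef
  have hbli : LinearIndependent F b := by
    apply LinearIndependent.of_comp (ladderModule F n i₁ j₁).subtype
    exact hsb.comp Subtype.val Subtype.val_injective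
  have hbspan : Submodule.span F (Set.range b) = ⊤ := by
    apply Submodule.map_injective_of_injective (ladderModule F n i₁ j₁).injective_subtype
    rw [Submodule.map_span, Submodule.map_top, Submodule.range_subtype]
    have : (ladderModule F n i₁ j₁).subtype '' Set.range b =
        { A | ∃ i j : Fin n, (i : ℕ) + 1 ≤ i₁ ∧ j₁ ≤ (j : ℕ) + 1 ∧
          A = Matrix.single i j 1 } := by
      ext A
      constructor
      · rintro ⟨x, ⟨p, rfl⟩, rfl⟩
        exact ⟨p.1.1, p.1.2, p.2.1, p.2.2, rfl⟩
      · rintro ⟨i, j, h1, h2, rfl⟩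
        exact ⟨b ⟨(i, j), h1, h2⟩, ⟨⟨(i, j), h1, h2⟩, rfl⟩, rfl⟩
    rw [this]
    rfl
  have Mbasis : Module.Basis ι F (ladderModule F n i₁ j₁) := Module.Basis.mk hbli (by rw [hbspan])
  -- cardinality computations
  have hcard1 : Fintype.card {i : Fin n // (i : ℕ) + 1 ≤ i₁} = i₁ := by
    have e : {i : Fin n // (i : ℕ) + 1 ≤ i₁} ≃ Fin i₁ :=
      { toFun := fun x => ⟨(x.1 : ℕ), by omega⟩
        invFun := fun y => ⟨⟨(y : ℕ), by have h := y.2; omega⟩, by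
          have h := y.2; show (y : ℕ) + 1 ≤ i₁; omega⟩
        left_inv := fun x => by ext; rfl
        right_inv := fun y => by ext; rfl }
    rw [Fintype.card_congr e, Fintype.card_fin]
  have hcard2 : Fintype.card {j : Fin n // j₁ ≤ (j : ℕ) + 1} = n - n₁ := by
    have e : {j : Fin n // j₁ ≤ (j : ℕ) + 1} ≃ Fin (n - n₁) :=
      { toFun := fun x => ⟨(x.1 : ℕ) - n₁, by
          have h1 := x.1.2; have h2 := x.2; omega⟩
        invFun := fun y => ⟨⟨(y : ℕ) + n₁, by have h := y.2; omega⟩, by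
          have h := y.2; show j₁ ≤ (y : ℕ) + n₁ + 1; omega⟩
        left_inv := fun x => by
          have h2 := x.2
          ext
          show (x.1 : ℕ) - n₁ + n₁ = (x.1 : ℕ)
          omega
        right_inv := fun y => by
          ext
          show (y : ℕ) + n₁ - n₁ = (y : ℕ)
          omega }
    rw [Fintype.card_congr e, Fintype.card_fin]
  have hcardι : Fintype.card ι = i₁ * (n - n₁) := by
    rw [Fintype.card_congr (Equiv.subtypeProdEquivProd
      (p := fun i : Fin n => (i : ℕ) + 1 ≤ i₁) (q := fun j : Fin n => j₁ ≤ (j : ℕ) + 1)),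
      Fintype.card_prod, hcard1, hcard2]
  set d : ℕ := i₁ * (n - n₁) with hddef
  clear_value d
  have hfinM : Module.finrank F (ladderModule F n i₁ j₁) = d := by
    rw [Module.finrank_eq_card_basis Mbasis, hcardι]
  have hd1 : 1 ≤ d := by
    rw [hddef]
    exact Nat.mul_pos (by omega) (by omega)
  -- the trace functional
  set φ : ladderModule F n i₁ j₁ →ₗ[F] F :=
    (Matrix.traceLinearMap (Fin n) F F).comp (ladderModule F n i₁ j₁).subtype with hφdef
  have hφtr : ∀ x : ladderModule F n i₁ j₁,
      φ x = Matrix.trace (x : Matrix (Fin n) (Fin n) F) := fun x => rfl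
  have hrange_le : LinearMap.range μ ≤ LinearMap.ker φ := by
    rintro z ⟨t, rfl⟩
    induction t using TensorProduct.induction_on with
    | zero => simp
    | tmul x y =>
        rw [LinearMap.mem_ker, hφtr, hμ, Matrix.trace_sub, Matrix.trace_mul_comm, sub_self]
    | add s t hs ht =>
        rw [map_add]
        exact (LinearMap.ker φ).add_mem hs ht
  -- φ is nonzero
  have hkk_mem : Matrix.single k k (1 : F) ∈ ladderModule F n i₁ j₁ := hmem k k (by
      show n₁ + 1 ≤ i₁; omega) (by show j₁ ≤ n₁ + 1; omega)
  have hφsurj : LinearMap.range φ = ⊤ := by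
    have h1 : φ ⟨Matrix.single k k (1 : F), hkk_mem⟩ = 1 := by
      rw [hφtr]
      exact Matrix.trace_single_eq_same k (1 : F)
    apply Submodule.eq_top_of_finrank_eq
    refine le_antisymm (Submodule.finrank_le _) ?_
    rw [Module.finrank_self]
    have hne : LinearMap.range φ ≠ ⊥ := by
      intro h
      have h2 : φ ⟨Matrix.single k k (1 : F), hkk_mem⟩ = 0 := by
        have h3 := LinearMap.mem_range_self φ ⟨Matrix.single k k (1 : F), hkk_mem⟩
        rw [h] at h3
        exact (Submodule.mem_bot F).mp h3
      rw [h1] at h2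
      exact one_ne_zero h2
    have h4 : Module.finrank F (LinearMap.range φ) ≠ 0 :=
      fun h => hne (Submodule.finrank_eq_zero.mp h)
    omega
  have hkerφ : Module.finrank F (LinearMap.ker φ) = d - 1 := by
    have h := LinearMap.finrank_range_add_finrank_ker φ
    rw [hφsurj, hfinM] at h
    have h2 : Module.finrank F (⊤ : Submodule F F) = 1 := by
      rw [finrank_top, Module.finrank_self]
    omega
  have hub : Module.finrank F (LinearMap.range μ) ≤ d - 1 := by
    rw [← hkerφ]
    exact Submodule.finrank_mono hrange_le
  -- lower bound: exhibit d - 1 independent elements of the range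
  set ι' := {p : Fin n × Fin n //
      ((p.1 : ℕ) + 1 ≤ i₁ ∧ j₁ ≤ (p.2 : ℕ) + 1) ∧ p ≠ (k, k)} with hι'def
  set v : ι' → Matrix (Fin n) (Fin n) F := fun p =>
    if p.1.1 = p.1.2 then
      Matrix.single p.1.1 p.1.1 1 - Matrix.single k k 1
    else Matrix.single p.1.1 p.1.2 1 with hvdef
  set P : Matrix (Fin n) (Fin n) F →ₗ[F] Matrix (Fin n) (Fin n) F :=
    { toFun := fun z => z - z k k • Matrix.single k k 1
      map_add' := fun x y => by
        ext a c
        simp only [Matrix.sub_apply, Matrix.add_apply, Matrix.smul_apply, smul_eq_mul]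
        ring
      map_smul' := fun r x => by
        ext a c
        simp only [Matrix.sub_apply, Matrix.smul_apply, smul_eq_mul, RingHom.id_apply]
        ring } with hPdef
  have hPv : ∀ p : ι', P (v p) = Matrix.single p.1.1 p.1.2 1 := by
    intro p
    by_cases h : p.1.1 = p.1.2
    · have hik : p.1.1 ≠ k := by
        intro hc
        exact p.2.2 (by rw [Prod.ext_iff]; exact ⟨hc, h ▸ hc⟩)
      show v p - (v p) k k • _ = _
      have hv : v p = Matrix.single p.1.1 p.1.1 1 - Matrix.single k k 1 := by
        rw [hvdef]; simp only [if_pos h]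
      rw [hv]
      have h1 : (Matrix.single p.1.1 p.1.1 (1 : F)) k k = 0 := by
        rw [Matrix.single]
        simp [hik]
      have h2 : (Matrix.single k k (1 : F)) k k = 1 := by
        rw [Matrix.single]
        simp
      rw [Matrix.sub_apply, h1, h2]
      rw [← h]
      abel_nf
      simp
    · have hv : v p = Matrix.single p.1.1 p.1.2 1 := by
        rw [hvdef]; simp only [if_neg h]
      show v p - (v p) k k • _ = _
      have h1 : (v p) k k = 0 := by
        rw [hv, Matrix.single]
        simp only [Matrix.of_apply]
        rw [if_neg]
        intro hc
        rw [hc.1, hc.2] at h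
        exact h rfl
      rw [h1, hv]
      simp
  have hvli : LinearIndependent F v := by
    apply LinearIndependent.of_comp P
    have he : (⇑P ∘ v) = fun p : ι' => Matrix.single p.1.1 p.1.2 (1 : F) :=
      funext hPv
    rw [he]
    exact hsb.comp Subtype.val Subtype.val_injective
  have hkk_cond : ((k : ℕ) + 1 ≤ i₁ ∧ j₁ ≤ (k : ℕ) + 1) := by
    constructor
    · show n₁ + 1 ≤ i₁; omega
    · show j₁ ≤ n₁ + 1; omega
  have hcardι' : Fintype.card ι' = d - 1 := by
    have e : ι' ≃ {q : ι // q ≠ ⟨(k, k), hkk_cond⟩} :=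
      { toFun := fun p => ⟨⟨p.1, p.2.1⟩, fun hc => p.2.2 (congrArg Subtype.val hc)⟩
        invFun := fun q => ⟨q.1.1, q.1.2, fun hc => q.2 (Subtype.ext hc)⟩
        left_inv := fun p => rfl
        right_inv := fun q => rfl }
    rw [Fintype.card_congr e]
    rw [Fintype.card_subtype_compl (p := fun q : ι => q = ⟨(k, k), hkk_cond⟩)]
    rw [Fintype.card_subtype_eq, hcardι]
  have hspanv : Module.finrank F (Submodule.span F (Set.range v)) = d - 1 := by
    rw [finrank_span_eq_card hvli, hcardι']
  -- each v p is in the (image of the) range of μ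
  have hvmem : ∀ p : ι',
      v p ∈ Submodule.map (ladderModule F n i₁ j₁).subtype (LinearMap.range μ) := by
    intro p
    obtain ⟨⟨i, j⟩, ⟨hc1, hc2⟩, hne⟩ := p
    have hik_mem : Matrix.single i k (1 : F) ∈ ladderModule F n i₁ j₁ :=
      hmem i k hc1 (by show j₁ ≤ n₁ + 1; omega)
    by_cases h : i = j
    · -- diagonal case: v p = e_ii - e_kk = [e_ik, e_ki]
      have hikne : i ≠ k := fun hc => hne (by rw [Prod.ext_iff]; exact ⟨hc, h ▸ hc⟩)
      have hki_mem : Matrix.single k i (1 : F) ∈ ladderModule F n i₁ j₁ :=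
        hmem k i (by show n₁ + 1 ≤ i₁; omega) (h ▸ hc2)
      set x : ladderModule F n i₁ j₁ := ⟨Matrix.single i k 1, hik_mem⟩
      set y : ladderModule F n i₁ j₁ := ⟨Matrix.single k i 1, hki_mem⟩
      refine ⟨μ (x ⊗ₜ y), LinearMap.mem_range_self μ _, ?_⟩
      show (μ (x ⊗ₜ y) : Matrix (Fin n) (Fin n) F) = v ⟨(i, j), ⟨hc1, hc2⟩, hne⟩
      rw [hμ]
      show Matrix.single i k 1 * Matrix.single k i 1 -
        Matrix.single k i 1 * Matrix.single i k 1 = _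
      rw [Matrix.single_mul_single_same, Matrix.single_mul_single_same, mul_one]
      have hv2 : v ⟨(i, j), ⟨hc1, hc2⟩, hne⟩ =
          Matrix.single i i 1 - Matrix.single k k 1 := by
        rw [hvdef]
        simp only [if_pos h]
      rw [hv2]
    · -- off-diagonal case: v p = e_ij = [e_ik, e_kj]
      have hkj_mem : Matrix.single k j (1 : F) ∈ ladderModule F n i₁ j₁ :=
        hmem k j (by show n₁ + 1 ≤ i₁; omega) hc2
      set x : ladderModule F n i₁ j₁ := ⟨Matrix.single i k 1, hik_mem⟩
      set y : ladderModule F n i₁ j₁ := ⟨Matrix.single k j 1, hkj_mem⟩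
      refine ⟨μ (x ⊗ₜ y), LinearMap.mem_range_self μ _, ?_⟩
      show (μ (x ⊗ₜ y) : Matrix (Fin n) (Fin n) F) = v ⟨(i, j), ⟨hc1, hc2⟩, hne⟩
      rw [hμ]
      show Matrix.single i k 1 * Matrix.single k j 1 -
        Matrix.single k j 1 * Matrix.single i k 1 = _
      rw [Matrix.single_mul_single_same, mul_one,
        Matrix.single_mul_single_of_ne (h := Ne.symm h)]
      have hv2 : v ⟨(i, j), ⟨hc1, hc2⟩, hne⟩ = Matrix.single i j 1 := by
        rw [hvdef]
        simp only [if_neg h]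
      rw [hv2, sub_zero]
  have hlb : d - 1 ≤ Module.finrank F (LinearMap.range μ) := by
    rw [← hspanv,
      ← Submodule.finrank_map_subtype_eq (ladderModule F n i₁ j₁) (LinearMap.range μ)]
    exact Submodule.finrank_mono (Submodule.span_le.mpr (Set.range_subset_iff.mpr hvmem))
  have hrank : Module.finrank F (LinearMap.range μ) = d - 1 := le_antisymm hub hlb
  -- rank-nullity
  have htens : Module.finrank F
      (ladderModule F n i₁ j₁ ⊗[F] ladderModule F n i₁ j₁) = d * d := by
    rw [Module.finrank_tensorProduct, hfinM]
  have hrn := @LinearMap.finrank_range_add_finrank_ker F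
    (ladderModule F n i₁ j₁ ⊗[F] ladderModule F n i₁ j₁) _ _ _ _ _ _
    (Module.Finite.tensorProduct F _ _) μ
  have hconv : Module.finrank F ↥(LinearMap.range μ) +
      Cardinal.toNat (Module.rank F ↥(LinearMap.ker μ)) = d * d := by
    rw [← htens]
    exact hrn
  rw [hrank] at hconv
  have hkerval : Cardinal.toNat (Module.rank F ↥(LinearMap.ker μ)) = d * d - d + 1 := by
    have hdd' : d ≤ d * d := Nat.le_mul_of_pos_left d (by omega)
    generalize hA : Cardinal.toNat (Module.rank F ↥(LinearMap.ker μ)) = A at hconv ⊢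
    generalize hG : d * d = g at hconv hdd' ⊢
    omega
  rw [hkerval]
  have hdval : (d : ℤ) = ((n₁ : ℤ) + n₂) * ((n₂ : ℤ) + n₃) := by
    have e1 : i₁ = n₁ + n₂ := by omega
    have e2 : n - n₁ = n₂ + n₃ := by omega
    rw [hddef, e1, e2]
    push_cast
    ring
  have hdd : d ≤ d * d := Nat.le_mul_of_pos_left d (by omega)
  have hcast : ((d * d - d + 1 : ℕ) : ℤ) = (d : ℤ) * d - d + 1 := by
    push_cast [Nat.cast_sub hdd]
    ring
  rw [hcast, hdval]
  ring
end

section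
/- Let F be a field, n a positive integer, and L = {(i₁, j₁)} a 1-step ladder on n with i₁ ≥ j₁. Set n₁ = j₁ - 1, n₂ = i₁ - j₁ + 1, n₃ = n - i₁. Let μ : M_L ⊗_F M_L → M_L be the linear map induced by (x,y) ↦ [x,y] = xy - yx. Then the image of μ (the derived subalgebra [M_L, M_L]) has dimension n₂² - 1 + n₁n₂ + n₂n₃ + n₁n₃ over F. -/
open Matrix TensorProduct

namespace LadderAux

variable {F : Type*} [Field F] {n i₁ j₁ : ℕ}

theorem stdBasisMatrix_mem (i j : Fin n) (hi : (i : ℕ) + 1 ≤ i₁) (hj : j₁ ≤ (j : ℕ) + 1) :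
    Matrix.single i j (1 : F) ∈ ladderModule F n i₁ j₁ :=
  Submodule.subset_span ⟨i, j, hi, hj, rfl⟩

theorem mem_ladder_iff (x : Matrix (Fin n) (Fin n) F) :
    x ∈ ladderModule F n i₁ j₁ ↔
      ∀ i j : Fin n, x i j ≠ 0 → (i : ℕ) + 1 ≤ i₁ ∧ j₁ ≤ (j : ℕ) + 1 := by
  constructor
  · intro hx
    have hP : ladderModule F n i₁ j₁ ≤
        { carrier := {y : Matrix (Fin n) (Fin n) F |
            ∀ i j : Fin n, y i j ≠ 0 → (i : ℕ) + 1 ≤ i₁ ∧ j₁ ≤ (j : ℕ) + 1}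
          add_mem' := by
            intro a b ha hb i j h
            by_cases h1 : a i j = 0
            · exact hb i j (by simpa [Matrix.add_apply, h1] using h)
            · exact ha i j h1
          zero_mem' := by intro i j h; simp at h
          smul_mem' := by
            intro c a ha i j h
            exact ha i j (by intro h0; simp [Matrix.smul_apply, h0] at h) } := by
      apply Submodule.span_le.mpr
      rintro A ⟨i, j, hi, hj, rfl⟩
      intro i' j' h
      by_cases h1 : i = i'
      · by_cases h2 : j = j'
        · subst h1; subst h2; exact ⟨hi, hj⟩
        · simp [Matrix.single, h2] at h
      · simp [Matrix.single, h1] at h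
    exact hP hx
  · intro hx
    rw [Matrix.matrix_eq_sum_single x]
    apply Submodule.sum_mem
    intro i _
    apply Submodule.sum_mem
    intro j _
    by_cases h : x i j = 0
    · simp [h]
    · have hij := hx i j h
      have : Matrix.single i j (x i j) = x i j • Matrix.single i j (1 : F) := by
        rw [Matrix.smul_single, smul_eq_mul, mul_one]
      rw [this]
      exact Submodule.smul_mem _ _ (stdBasisMatrix_mem i j hij.1 hij.2)

theorem finrank_ladder (hi₁n : i₁ ≤ n) (hj₁ : 1 ≤ j₁) :
    Module.finrank F (ladderModule F n i₁ j₁) = i₁ * (n + 1 - j₁) := by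
  classical
  set ι := {p : Fin n × Fin n // (p.1 : ℕ) + 1 ≤ i₁ ∧ j₁ ≤ (p.2 : ℕ) + 1} with hι
  set b : ι → Matrix (Fin n) (Fin n) F := fun p => Matrix.stdBasis F (Fin n) (Fin n) p.1 with hb
  have hli : LinearIndependent F b :=
    (Matrix.stdBasis F (Fin n) (Fin n)).linearIndependent.comp Subtype.val Subtype.val_injective
  have hrange : ladderModule F n i₁ j₁ = Submodule.span F (Set.range b) := by
    unfold ladderModule
    congr 1
    ext A
    constructor
    · rintro ⟨i, j, hi, hj, rfl⟩
      exact ⟨⟨(i, j), hi, hj⟩, Matrix.stdBasis_eq_single F i j⟩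
    · rintro ⟨⟨⟨i, j⟩, hi, hj⟩, rfl⟩
      exact ⟨i, j, hi, hj, Matrix.stdBasis_eq_single F i j⟩
  rw [hrange, finrank_span_eq_card hli]
  have e1 : {i : Fin n // (i : ℕ) + 1 ≤ i₁} ≃ Fin i₁ :=
    { toFun := fun p => ⟨p.1, by have := p.2; omega⟩
      invFun := fun k => ⟨⟨k, by have := k.isLt; omega⟩,
        by show (k : ℕ) + 1 ≤ i₁; have := k.isLt; omega⟩
      left_inv := fun p => by apply Subtype.ext; apply Fin.ext; rfl
      right_inv := fun k => by apply Fin.ext; rfl }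
  have e2 : {j : Fin n // j₁ ≤ (j : ℕ) + 1} ≃ Fin (n + 1 - j₁) :=
    { toFun := fun p => ⟨(p.1 : ℕ) + 1 - j₁, by have := p.1.isLt; have := p.2; omega⟩
      invFun := fun k => ⟨⟨(k : ℕ) + j₁ - 1, by have := k.isLt; omega⟩,
        by show j₁ ≤ ((k : ℕ) + j₁ - 1) + 1; have := k.isLt; omega⟩
      left_inv := fun p => by
        apply Subtype.ext; apply Fin.ext
        have := p.2; simp; omega
      right_inv := fun k => by
        apply Fin.ext
        have := k.isLt; simp; omega }
  have : Fintype.card ι = i₁ * (n + 1 - j₁) := by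
    rw [Fintype.card_congr (Equiv.subtypeProdEquivProd (p := fun i : Fin n => (i : ℕ) + 1 ≤ i₁)
      (q := fun j : Fin n => j₁ ≤ (j : ℕ) + 1))]
    rw [Fintype.card_prod, Fintype.card_congr e1, Fintype.card_congr e2]
    simp
  rw [this]

end LadderAux

set_option maxHeartbeats 1000000 in
open LadderAux in
/-- The dimension of the image of the bracket-induced map `μ : M_L ⊗ M_L → M_L`
(the derived subalgebra `[M_L, M_L]`) for a one-step ladder with `i₁ ≥ j₁`, where
`n₁ = j₁ - 1`, `n₂ = i₁ - j₁ + 1`, `n₃ = n - i₁`, equals `n₂² - 1 + n₁n₂ + n₂n₃ + n₁n₃`. -/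
theorem range_bracket_ladderModule_finrank
    (F : Type*) [Field F] (n i₁ j₁ : ℕ) (hn : 1 ≤ n)
    (hi₁ : 1 ≤ i₁) (hi₁n : i₁ ≤ n) (hj₁ : 1 ≤ j₁) (hj₁n : j₁ ≤ n) (hij : j₁ ≤ i₁)
    (n₁ n₂ n₃ : ℕ) (hn₁ : n₁ + 1 = j₁) (hn₂ : n₂ + j₁ = i₁ + 1) (hn₃ : n₃ + i₁ = n)
    (μ : ladderModule F n i₁ j₁ ⊗[F] ladderModule F n i₁ j₁ →ₗ[F] ladderModule F n i₁ j₁)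
    (hμ : ∀ x y : ladderModule F n i₁ j₁,
      ((μ (x ⊗ₜ y) : Matrix (Fin n) (Fin n) F)) =
        (x : Matrix (Fin n) (Fin n) F) * y - (y : Matrix (Fin n) (Fin n) F) * x) :
    (Module.finrank F ↥(LinearMap.range μ) : ℤ) =
      (n₂ : ℤ) ^ 2 - 1 + n₁ * n₂ + n₂ * n₃ + n₁ * n₃ := by
  classical
  set d : Fin n := ⟨j₁ - 1, by omega⟩ with hd
  have hdval : (d : ℕ) + 1 = j₁ := by simp [hd]; omega
  set φ : ladderModule F n i₁ j₁ →ₗ[F] F :=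
    (Matrix.traceLinearMap (Fin n) F F).comp (ladderModule F n i₁ j₁).subtype with hφdef
  have hφ : ∀ v : ladderModule F n i₁ j₁, φ v = Matrix.trace (v : Matrix (Fin n) (Fin n) F) :=
    fun v => rfl
  -- range μ = ker φ
  have hkey : LinearMap.range μ = LinearMap.ker φ := by
    apply le_antisymm
    · rintro _ ⟨z, rfl⟩
      rw [LinearMap.mem_ker]
      induction z using TensorProduct.induction_on with
      | zero => simp
      | tmul x y =>
        rw [hφ, hμ, Matrix.trace_sub, Matrix.trace_mul_comm, sub_self]
      | add a b ha hb =>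
        rw [map_add, map_add, ha, hb, add_zero]
    · intro x hx
      rw [LinearMap.mem_ker, hφ] at hx
      set R' := Submodule.map (ladderModule F n i₁ j₁).subtype (LinearMap.range μ) with hR'
      have hdmem : Matrix.single d d (1 : F) ∈ ladderModule F n i₁ j₁ :=
        stdBasisMatrix_mem d d (by omega) (by omega)
      have hoff : ∀ i j : Fin n, (i : ℕ) + 1 ≤ i₁ → j₁ ≤ (j : ℕ) + 1 → i ≠ j →
          Matrix.single i j (1 : F) ∈ R' := by
        intro i j hi hj hne
        set u : ladderModule F n i₁ j₁ :=
          ⟨Matrix.single i d 1, stdBasisMatrix_mem i d hi (by omega)⟩ with hu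
        set v : ladderModule F n i₁ j₁ :=
          ⟨Matrix.single d j 1, stdBasisMatrix_mem d j (by omega) hj⟩ with hv
        refine Submodule.mem_map.mpr ⟨μ (u ⊗ₜ v), LinearMap.mem_range_self μ _, ?_⟩
        have h0 : Matrix.single d j (1 : F) * Matrix.single i d 1 = 0 :=
          Matrix.single_mul_single_of_ne _ _ _ _ (Ne.symm hne) _
        rw [Submodule.subtype_apply, hμ u v, hu, hv]
        rw [Matrix.single_mul_single_same, h0, mul_one, sub_zero]
      have hdiag : ∀ k : Fin n, (k : ℕ) + 1 ≤ i₁ → j₁ ≤ (k : ℕ) + 1 →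
          Matrix.single k k (1 : F) - Matrix.single d d 1 ∈ R' := by
        intro k hk1 hk2
        set u : ladderModule F n i₁ j₁ :=
          ⟨Matrix.single k d 1, stdBasisMatrix_mem k d hk1 (by omega)⟩ with hu
        set v : ladderModule F n i₁ j₁ :=
          ⟨Matrix.single d k 1, stdBasisMatrix_mem d k (by omega) hk2⟩ with hv
        refine Submodule.mem_map.mpr ⟨μ (u ⊗ₜ v), LinearMap.mem_range_self μ _, ?_⟩
        rw [Submodule.subtype_apply, hμ u v, hu, hv]
        rw [Matrix.single_mul_single_same, Matrix.single_mul_single_same, mul_one]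
      set c : Fin n → Fin n → Matrix (Fin n) (Fin n) F := fun i j =>
        (x : Matrix (Fin n) (Fin n) F) i j • Matrix.single i j (1 : F) -
          (if i = j then (x : Matrix (Fin n) (Fin n) F) i j else 0) •
            Matrix.single d d (1 : F) with hc
      have hsum : (x : Matrix (Fin n) (Fin n) F) = ∑ i, ∑ j, c i j := by
        simp only [hc, Finset.sum_sub_distrib, ← Finset.sum_smul]
        have h1 : ∀ i j : Fin n, (x : Matrix (Fin n) (Fin n) F) i j •
            Matrix.single i j (1 : F) =
            Matrix.single i j ((x : Matrix (Fin n) (Fin n) F) i j) := by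
          intro i j; rw [Matrix.smul_single, smul_eq_mul, mul_one]
        simp only [h1, ← Matrix.matrix_eq_sum_single]
        have h2 : ∑ i : Fin n, ∑ j : Fin n,
            (if i = j then (x : Matrix (Fin n) (Fin n) F) i j else 0) =
            Matrix.trace (x : Matrix (Fin n) (Fin n) F) := by
          rw [Matrix.trace]
          apply Finset.sum_congr rfl
          intro i _
          rw [Finset.sum_ite_eq (Finset.univ : Finset (Fin n)) i
            (fun j => (x : Matrix (Fin n) (Fin n) F) i j)]
          simp [Matrix.diag]
        rw [h2, hx, zero_smul, sub_zero]
      have key : (x : Matrix (Fin n) (Fin n) F) ∈ R' := by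
        rw [hsum]
        apply Submodule.sum_mem
        intro i _
        apply Submodule.sum_mem
        intro j _
        by_cases hijeq : i = j
        · subst hijeq
          by_cases hzero : (x : Matrix (Fin n) (Fin n) F) i i = 0
          · simp [hc, hzero]
          · have conds := (mem_ladder_iff (x : Matrix (Fin n) (Fin n) F)).mp x.2 i i hzero
            have : c i i = (x : Matrix (Fin n) (Fin n) F) i i •
                (Matrix.single i i (1 : F) - Matrix.single d d 1) := by
              simp [hc, smul_sub]
            rw [this]
            exact Submodule.smul_mem _ _ (hdiag i conds.1 conds.2)
        · by_cases hzero : (x : Matrix (Fin n) (Fin n) F) i j = 0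
          · simp [hc, hzero, hijeq]
          · have conds := (mem_ladder_iff (x : Matrix (Fin n) (Fin n) F)).mp x.2 i j hzero
            have : c i j = (x : Matrix (Fin n) (Fin n) F) i j •
                Matrix.single i j (1 : F) := by
              simp [hc, hijeq]
            rw [this]
            exact Submodule.smul_mem _ _ (hoff i j conds.1 conds.2 hijeq)
      rcases key with ⟨y, hy, hval⟩
      have hyx : y = x := Subtype.ext hval
      rwa [hyx] at hy
  -- rank computation
  have hsurj : LinearMap.range φ = ⊤ := by
    rw [LinearMap.range_eq_top]
    intro a
    refine ⟨⟨a • Matrix.single d d (1 : F),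
      Submodule.smul_mem _ _ (stdBasisMatrix_mem d d (by omega) (by omega))⟩, ?_⟩
    rw [hφ]
    show Matrix.trace (a • Matrix.single d d (1 : F)) = a
    rw [Matrix.smul_single, smul_eq_mul, mul_one, Matrix.trace_single_eq_same]
  have hrn := LinearMap.finrank_range_add_finrank_ker φ
  rw [hsurj] at hrn
  rw [finrank_top, Module.finrank_self] at hrn
  have hdim : Module.finrank F (ladderModule F n i₁ j₁) = i₁ * (n + 1 - j₁) :=
    finrank_ladder hi₁n hj₁
  rw [hdim] at hrn
  have e1 : i₁ = n₁ + n₂ := by omega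
  have e2 : n + 1 - j₁ = n₂ + n₃ := by omega
  have hprod : i₁ * (n + 1 - j₁) = (n₁ + n₂) * (n₂ + n₃) := by rw [e1, e2]
  have hrn' : 1 + Module.finrank F ↥(LinearMap.ker φ) = (n₁ + n₂) * (n₂ + n₃) :=
    hrn.trans hprod
  rw [hkey]
  have hfin : (Module.finrank F ↥(LinearMap.ker φ) : ℤ) + 1 = ((n₁ + n₂) * (n₂ + n₃) : ℕ) := by
    exact_mod_cast by omega
  push_cast at hfin ⊢
  linear_combination hfin
end

section
/- Let F be a field and let n₁ ≥ 0, n₂ ≥ 1, n₃ ≥ 0 be integers with n = n₁ + n₂ + n₃. In M_n(F), for indices i, j, l ∈ (n₁, n₁+n₂] and q ∈ (n₁+n₂, n], the following elements of M_n(F) ⊗_F M_n(F) all lie in the kernel of the linear map induced by the commutator bracket: (i) e_{i,j} ⊗ e_{l,q} and e_{l,q} ⊗ e_{i,j} whenever j ≠ l; (ii) (e_{i,j} - e_{i,j+1}) ⊗ (e_{j,q} + e_{j+1,q}) and (e_{j,q} + e_{j+1,q}) ⊗ (e_{i,j} - e_{i,j+1}) whenever j ≤ n₁+n₂-1; (iii)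 (e_{i,i} + e_{i,q}) ⊗ (e_{i,i} + e_{i,q}). Moreover, the collection of all tensors listed in (i), (ii), and (iii) is linearly independent over F. -/
open Matrix TensorProduct

set_option maxHeartbeats 1000000
set_option synthInstance.maxHeartbeats 400000

section TBHelpers
variable (F : Type*) [Field F] (n : ℕ)

/-- The tensor-product basis of `M_n(F) ⊗ M_n(F)` built from matrix units. -/
noncomputable def tbBasis :
    Module.Basis ((Fin n × Fin n) × (Fin n × Fin n)) F
      (Matrix (Fin n) (Fin n) F ⊗[F] Matrix (Fin n) (Fin n) F) :=
  (Matrix.stdBasis F (Fin n) (Fin n)).tensorProduct (Matrix.stdBasis F (Fin n) (Fin n))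

variable {F n}

lemma tb_tmul (a b c d : Fin n) (p : (Fin n × Fin n) × (Fin n × Fin n)) :
    (tbBasis F n).repr (Matrix.single a b (1:F) ⊗ₜ[F] Matrix.single c d (1:F)) p
      = if p = ((a,b),(c,d)) then 1 else 0 := by
  obtain ⟨p₁, p₂⟩ := p
  rw [tbBasis, Module.Basis.tensorProduct_repr_tmul_apply, ← Matrix.stdBasis_eq_single,
    ← Matrix.stdBasis_eq_single, Module.Basis.repr_self, Module.Basis.repr_self,
    Finsupp.single_apply, Finsupp.single_apply]
  by_cases h1 : ((a,b) : Fin n × Fin n) = p₁ <;> by_cases h2 : ((c,d) : Fin n × Fin n) = p₂ <;>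
    simp [h1, h2, Prod.ext_iff] <;> aesop

lemma tb_sub_add (a b b' c c' d : Fin n) (p : (Fin n × Fin n) × (Fin n × Fin n)) :
    (tbBasis F n).repr ((Matrix.single a b (1:F) - Matrix.single a b' 1) ⊗ₜ[F]
        (Matrix.single c d (1:F) + Matrix.single c' d 1)) p
      = (if p = ((a,b),(c,d)) then 1 else 0) + (if p = ((a,b),(c',d)) then 1 else 0)
        - (if p = ((a,b'),(c,d)) then 1 else 0) - (if p = ((a,b'),(c',d)) then 1 else 0) := by
  simp only [sub_tmul, tmul_add, map_add, map_sub, Finsupp.add_apply, Finsupp.sub_apply, tb_tmul]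
  ring

lemma tb_add_sub (a b b' c c' d : Fin n) (p : (Fin n × Fin n) × (Fin n × Fin n)) :
    (tbBasis F n).repr ((Matrix.single c d (1:F) + Matrix.single c' d 1) ⊗ₜ[F]
        (Matrix.single a b (1:F) - Matrix.single a b' 1)) p
      = (if p = ((c,d),(a,b)) then 1 else 0) - (if p = ((c,d),(a,b')) then 1 else 0)
        + (if p = ((c',d),(a,b)) then 1 else 0) - (if p = ((c',d),(a,b')) then 1 else 0) := by
  simp only [add_tmul, tmul_sub, map_add, map_sub, Finsupp.add_apply, Finsupp.sub_apply, tb_tmul]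
  ring

lemma tb_add_add (a b c d : Fin n) (p : (Fin n × Fin n) × (Fin n × Fin n)) :
    (tbBasis F n).repr ((Matrix.single a b (1:F) + Matrix.single c d 1) ⊗ₜ[F]
        (Matrix.single a b (1:F) + Matrix.single c d 1)) p
      = (if p = ((a,b),(a,b)) then 1 else 0) + (if p = ((a,b),(c,d)) then 1 else 0)
        + (if p = ((c,d),(a,b)) then 1 else 0) + (if p = ((c,d),(c,d)) then 1 else 0) := by
  simp only [add_tmul, tmul_add, map_add, Finsupp.add_apply, tb_tmul]
  ring

end TBHelpers

/-- Index data for the tensors `e_{i,j} ⊗ e_{l,q}` (and their swaps) with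
`i, j, l` in the middle block `(n₁, n₁+n₂]` (1-based), `q` in the last block
`(n₁+n₂, n]`, and `j ≠ l`.  Indices here are 0-based `Fin` indices. -/
structure IdxT (n₁ n₂ n₃ : ℕ) where
  i : Fin (n₁ + n₂ + n₃)
  j : Fin (n₁ + n₂ + n₃)
  l : Fin (n₁ + n₂ + n₃)
  q : Fin (n₁ + n₂ + n₃)
  hi : n₁ ≤ (i : ℕ) ∧ (i : ℕ) < n₁ + n₂
  hj : n₁ ≤ (j : ℕ) ∧ (j : ℕ) < n₁ + n₂
  hl : n₁ ≤ (l : ℕ) ∧ (l : ℕ) < n₁ + n₂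
  hq : n₁ + n₂ ≤ (q : ℕ)
  hjl : j ≠ l

/-- Index data for the tensors `(e_{i,j} - e_{i,j+1}) ⊗ (e_{j,q} + e_{j+1,q})`
(and their swaps) with `i, j, j+1` in the middle block and `q` in the last block;
`j'` records the successor index `j + 1`. -/
structure IdxS (n₁ n₂ n₃ : ℕ) where
  i : Fin (n₁ + n₂ + n₃)
  j : Fin (n₁ + n₂ + n₃)
  j' : Fin (n₁ + n₂ + n₃)
  q : Fin (n₁ + n₂ + n₃)
  hi : n₁ ≤ (i : ℕ) ∧ (i : ℕ) < n₁ + n₂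
  hj : n₁ ≤ (j : ℕ) ∧ (j : ℕ) + 1 < n₁ + n₂
  hj' : (j' : ℕ) = (j : ℕ) + 1
  hq : n₁ + n₂ ≤ (q : ℕ)

/-- Index data for the tensors `(e_{i,i} + e_{i,q}) ⊗ (e_{i,i} + e_{i,q})` with `i`
in the middle block and `q` in the last block. -/
structure IdxR (n₁ n₂ n₃ : ℕ) where
  i : Fin (n₁ + n₂ + n₃)
  q : Fin (n₁ + n₂ + n₃)
  hi : n₁ ≤ (i : ℕ) ∧ (i : ℕ) < n₁ + n₂
  hq : n₁ + n₂ ≤ (q : ℕ)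

lemma IdxT.ext' {n₁ n₂ n₃ : ℕ} {t t' : IdxT n₁ n₂ n₃}
    (h1 : t.i = t'.i) (h2 : t.j = t'.j) (h3 : t.l = t'.l) (h4 : t.q = t'.q) : t = t' := by
  obtain ⟨i, j, l, q, _, _, _, _, _⟩ := t
  obtain ⟨i', j', l', q', _, _, _, _, _⟩ := t'
  simp only at h1 h2 h3 h4
  subst h1 h2 h3 h4
  rfl

lemma IdxS.ext' {n₁ n₂ n₃ : ℕ} {s s' : IdxS n₁ n₂ n₃}
    (h1 : s.i = s'.i) (h2 : s.j = s'.j) (h4 : s.q = s'.q) : s = s' := by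
  have h3 : s.j' = s'.j' := by
    have e1 := s.hj'; have e2 := s'.hj'
    have e3 := congrArg Fin.val h2
    exact Fin.ext (by omega)
  obtain ⟨i, j, j'', q, _, _, _, _⟩ := s
  obtain ⟨i', j₂, j₂', q', _, _, _, _⟩ := s'
  simp only at h1 h2 h3 h4
  subst h1 h2 h3 h4
  rfl

lemma IdxR.ext' {n₁ n₂ n₃ : ℕ} {r r' : IdxR n₁ n₂ n₃}
    (h1 : r.i = r'.i) (h2 : r.q = r'.q) : r = r' := by
  obtain ⟨i, q, _, _⟩ := r
  obtain ⟨i', q', _, _⟩ := r'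
  simp only at h1 h2
  subst h1 h2
  rfl

instance {n₁ n₂ n₃ : ℕ} : Finite (IdxT n₁ n₂ n₃) :=
  Finite.of_injective (fun t => (t.i, t.j, t.l, t.q)) (by
    intro t t' h
    simp only [Prod.mk.injEq] at h
    exact IdxT.ext' h.1 h.2.1 h.2.2.1 h.2.2.2)

instance {n₁ n₂ n₃ : ℕ} : Finite (IdxS n₁ n₂ n₃) :=
  Finite.of_injective (fun s => (s.i, s.j, s.q)) (by
    intro s s' h
    simp only [Prod.mk.injEq] at h
    exact IdxS.ext' h.1 h.2.1 h.2.2)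

instance {n₁ n₂ n₃ : ℕ} : Finite (IdxR n₁ n₂ n₃) :=
  Finite.of_injective (fun r => (r.i, r.q)) (by
    intro r r' h
    simp only [Prod.mk.injEq] at h
    exact IdxR.ext' h.1 h.2)

/-- The family of tensors listed in (i), (ii), (iii). -/
noncomputable def tensorFamily (F : Type*) [Field F] (n₁ n₂ n₃ : ℕ) :
    (IdxT n₁ n₂ n₃ ⊕ IdxT n₁ n₂ n₃) ⊕ (IdxS n₁ n₂ n₃ ⊕ IdxS n₁ n₂ n₃) ⊕ IdxR n₁ n₂ n₃ →
      Matrix (Fin (n₁ + n₂ + n₃)) (Fin (n₁ + n₂ + n₃)) F ⊗[F]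
        Matrix (Fin (n₁ + n₂ + n₃)) (Fin (n₁ + n₂ + n₃)) F
  | Sum.inl (Sum.inl t) => Matrix.single t.i t.j 1 ⊗ₜ Matrix.single t.l t.q 1
  | Sum.inl (Sum.inr t) => Matrix.single t.l t.q 1 ⊗ₜ Matrix.single t.i t.j 1
  | Sum.inr (Sum.inl (Sum.inl s)) =>
      (Matrix.single s.i s.j 1 - Matrix.single s.i s.j' 1) ⊗ₜ
        (Matrix.single s.j s.q 1 + Matrix.single s.j' s.q 1)
  | Sum.inr (Sum.inl (Sum.inr s)) =>
      (Matrix.single s.j s.q 1 + Matrix.single s.j' s.q 1) ⊗ₜ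
        (Matrix.single s.i s.j 1 - Matrix.single s.i s.j' 1)
  | Sum.inr (Sum.inr r) =>
      (Matrix.single r.i r.i 1 + Matrix.single r.i r.q 1) ⊗ₜ
        (Matrix.single r.i r.i 1 + Matrix.single r.i r.q 1)

/-- Coordinates of the tensor family in the matrix-unit tensor basis. -/
noncomputable def famCoeff (F : Type*) [Field F] (n₁ n₂ n₃ : ℕ)
    (k : (IdxT n₁ n₂ n₃ ⊕ IdxT n₁ n₂ n₃) ⊕ (IdxS n₁ n₂ n₃ ⊕ IdxS n₁ n₂ n₃) ⊕ IdxR n₁ n₂ n₃)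
    (p : (Fin (n₁+n₂+n₃) × Fin (n₁+n₂+n₃)) × (Fin (n₁+n₂+n₃) × Fin (n₁+n₂+n₃))) : F :=
  (tbBasis F (n₁+n₂+n₃)).repr (tensorFamily F n₁ n₂ n₃ k) p

section FamCoeff
variable {F : Type*} [Field F] {n₁ n₂ n₃ : ℕ}

lemma famCoeff_T1 (t : IdxT n₁ n₂ n₃)
    (p : (Fin (n₁+n₂+n₃) × Fin (n₁+n₂+n₃)) × (Fin (n₁+n₂+n₃) × Fin (n₁+n₂+n₃))) :
    famCoeff F n₁ n₂ n₃ (Sum.inl (Sum.inl t)) p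
      = if p = ((t.i, t.j), (t.l, t.q)) then 1 else 0 := by
  unfold famCoeff
  simp only [tensorFamily]
  exact tb_tmul _ _ _ _ _

lemma famCoeff_T2 (t : IdxT n₁ n₂ n₃)
    (p : (Fin (n₁+n₂+n₃) × Fin (n₁+n₂+n₃)) × (Fin (n₁+n₂+n₃) × Fin (n₁+n₂+n₃))) :
    famCoeff F n₁ n₂ n₃ (Sum.inl (Sum.inr t)) p
      = if p = ((t.l, t.q), (t.i, t.j)) then 1 else 0 := by
  unfold famCoeff
  simp only [tensorFamily]
  exact tb_tmul _ _ _ _ _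

lemma famCoeff_S1 (s : IdxS n₁ n₂ n₃)
    (p : (Fin (n₁+n₂+n₃) × Fin (n₁+n₂+n₃)) × (Fin (n₁+n₂+n₃) × Fin (n₁+n₂+n₃))) :
    famCoeff F n₁ n₂ n₃ (Sum.inr (Sum.inl (Sum.inl s))) p
      = (if p = ((s.i,s.j),(s.j,s.q)) then 1 else 0)
        + (if p = ((s.i,s.j),(s.j',s.q)) then 1 else 0)
        - (if p = ((s.i,s.j'),(s.j,s.q)) then 1 else 0)
        - (if p = ((s.i,s.j'),(s.j',s.q)) then 1 else 0) := by
  unfold famCoeff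
  simp only [tensorFamily]
  exact tb_sub_add _ _ _ _ _ _ _

lemma famCoeff_S2 (s : IdxS n₁ n₂ n₃)
    (p : (Fin (n₁+n₂+n₃) × Fin (n₁+n₂+n₃)) × (Fin (n₁+n₂+n₃) × Fin (n₁+n₂+n₃))) :
    famCoeff F n₁ n₂ n₃ (Sum.inr (Sum.inl (Sum.inr s))) p
      = (if p = ((s.j,s.q),(s.i,s.j)) then 1 else 0)
        - (if p = ((s.j,s.q),(s.i,s.j')) then 1 else 0)
        + (if p = ((s.j',s.q),(s.i,s.j)) then 1 else 0)
        - (if p = ((s.j',s.q),(s.i,s.j')) then 1 else 0) := by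
  unfold famCoeff
  simp only [tensorFamily]
  exact tb_add_sub _ _ _ _ _ _ _

lemma famCoeff_R (r : IdxR n₁ n₂ n₃)
    (p : (Fin (n₁+n₂+n₃) × Fin (n₁+n₂+n₃)) × (Fin (n₁+n₂+n₃) × Fin (n₁+n₂+n₃))) :
    famCoeff F n₁ n₂ n₃ (Sum.inr (Sum.inr r)) p
      = (if p = ((r.i,r.i),(r.i,r.i)) then 1 else 0)
        + (if p = ((r.i,r.i),(r.i,r.q)) then 1 else 0)
        + (if p = ((r.i,r.q),(r.i,r.i)) then 1 else 0)
        + (if p = ((r.i,r.q),(r.i,r.q)) then 1 else 0) := by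
  unfold famCoeff
  simp only [tensorFamily]
  exact tb_add_add _ _ _ _ _

end FamCoeff
/-- All the tensors in the family lie in the kernel of the map induced by the
commutator bracket, and the family is linearly independent. -/
theorem tensorFamily_mem_ker_and_linearIndependent
    (F : Type*) [Field F] (n₁ n₂ n₃ : ℕ) (hn₂ : 1 ≤ n₂)
    (μ : Matrix (Fin (n₁ + n₂ + n₃)) (Fin (n₁ + n₂ + n₃)) F ⊗[F]
          Matrix (Fin (n₁ + n₂ + n₃)) (Fin (n₁ + n₂ + n₃)) F
        →ₗ[F] Matrix (Fin (n₁ + n₂ + n₃)) (Fin (n₁ + n₂ + n₃)) F)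
    (hμ : ∀ x y : Matrix (Fin (n₁ + n₂ + n₃)) (Fin (n₁ + n₂ + n₃)) F,
      μ (x ⊗ₜ y) = x * y - y * x) :
    (∀ idx, μ (tensorFamily F n₁ n₂ n₃ idx) = 0)
      ∧ LinearIndependent F (tensorFamily F n₁ n₂ n₃) := by
  constructor
  · rintro ((t | t) | ((s | s) | r))
    · have h2 : t.q ≠ t.i := by
        have := t.hq; have := t.hi; exact Fin.ne_of_val_ne (by omega)
      simp [tensorFamily, hμ, Matrix.single_mul_single_of_ne, t.hjl, h2]
    · have h2 : t.q ≠ t.i := by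
        have := t.hq; have := t.hi; exact Fin.ne_of_val_ne (by omega)
      simp [tensorFamily, hμ, Matrix.single_mul_single_of_ne, t.hjl, h2]
    · have hjj' : s.j ≠ s.j' := by
        have := s.hj'; exact Fin.ne_of_val_ne (by omega)
      have hqi : s.q ≠ s.i := by
        have := s.hq; have := s.hi; exact Fin.ne_of_val_ne (by omega)
      simp [tensorFamily, hμ, sub_mul, mul_sub, add_mul, mul_add,
        Matrix.single_mul_single_of_ne, hjj', hjj'.symm, hqi]
    · have hjj' : s.j ≠ s.j' := by
        have := s.hj'; exact Fin.ne_of_val_ne (by omega)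
      have hqi : s.q ≠ s.i := by
        have := s.hq; have := s.hi; exact Fin.ne_of_val_ne (by omega)
      simp [tensorFamily, hμ, sub_mul, mul_sub, add_mul, mul_add,
        Matrix.single_mul_single_of_ne, hjj', hjj'.symm, hqi]
    · simp [tensorFamily, hμ]
  · classical
    letI : Fintype (IdxT n₁ n₂ n₃) := Fintype.ofFinite _
    letI : Fintype (IdxS n₁ n₂ n₃) := Fintype.ofFinite _
    letI : Fintype (IdxR n₁ n₂ n₃) := Fintype.ofFinite _
    rw [Fintype.linearIndependent_iff]
    intro g hg
    have key : ∀ p : (Fin (n₁+n₂+n₃) × Fin (n₁+n₂+n₃)) × (Fin (n₁+n₂+n₃) × Fin (n₁+n₂+n₃)),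
        (∑ k, g k * famCoeff F n₁ n₂ n₃ k p) = 0 := by
      intro p
      have h0 := congrArg (fun z => ((tbBasis F (n₁+n₂+n₃)).repr z) p) hg
      simp only [map_sum, _root_.map_smul, map_zero, Finsupp.coe_finset_sum, Finset.sum_apply,
        Finsupp.coe_smul, Pi.smul_apply, smul_eq_mul, Finsupp.coe_zero, Pi.zero_apply] at h0
      simpa only [famCoeff] using h0
    -- Stage 1 : the R coefficients vanish
    have hR : ∀ r : IdxR n₁ n₂ n₃, g (Sum.inr (Sum.inr r)) = 0 := by
      intro r
      have hk := key ((r.i, r.q), (r.i, r.q))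
      simp only [Fintype.sum_sum_type] at hk
      have e1 : (∑ t : IdxT n₁ n₂ n₃, g (Sum.inl (Sum.inl t)) *
          famCoeff F n₁ n₂ n₃ (Sum.inl (Sum.inl t)) ((r.i, r.q), (r.i, r.q))) = 0 := by
        refine Finset.sum_eq_zero fun t _ => ?_
        have hq := r.hq; have hj := t.hj
        rw [famCoeff_T1, if_neg, mul_zero]
        intro h; simp only [Prod.mk.injEq] at h
        have := congrArg Fin.val h.1.2; omega
      have e2 : (∑ t : IdxT n₁ n₂ n₃, g (Sum.inl (Sum.inr t)) *
          famCoeff F n₁ n₂ n₃ (Sum.inl (Sum.inr t)) ((r.i, r.q), (r.i, r.q))) = 0 := by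
        refine Finset.sum_eq_zero fun t _ => ?_
        have hq := r.hq; have hj := t.hj
        rw [famCoeff_T2, if_neg, mul_zero]
        intro h; simp only [Prod.mk.injEq] at h
        have := congrArg Fin.val h.2.2; omega
      have e3 : (∑ s : IdxS n₁ n₂ n₃, g (Sum.inr (Sum.inl (Sum.inl s))) *
          famCoeff F n₁ n₂ n₃ (Sum.inr (Sum.inl (Sum.inl s))) ((r.i, r.q), (r.i, r.q))) = 0 := by
        refine Finset.sum_eq_zero fun s _ => ?_
        have hq := r.hq; have hj := s.hj; have hj' := s.hj'
        have hc1 : ¬((((r.i, r.q), (r.i, r.q)) : (Fin (n₁+n₂+n₃) × Fin (n₁+n₂+n₃)) ×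
            (Fin (n₁+n₂+n₃) × Fin (n₁+n₂+n₃))) = ((s.i,s.j),(s.j,s.q))) := by
          intro h; simp only [Prod.mk.injEq] at h
          have := congrArg Fin.val h.1.2; omega
        have hc2 : ¬((((r.i, r.q), (r.i, r.q)) : (Fin (n₁+n₂+n₃) × Fin (n₁+n₂+n₃)) ×
            (Fin (n₁+n₂+n₃) × Fin (n₁+n₂+n₃))) = ((s.i,s.j),(s.j',s.q))) := by
          intro h; simp only [Prod.mk.injEq] at h
          have := congrArg Fin.val h.1.2; omega
        have hc3 : ¬((((r.i, r.q), (r.i, r.q)) : (Fin (n₁+n₂+n₃) × Fin (n₁+n₂+n₃)) ×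
            (Fin (n₁+n₂+n₃) × Fin (n₁+n₂+n₃))) = ((s.i,s.j'),(s.j,s.q))) := by
          intro h; simp only [Prod.mk.injEq] at h
          have := congrArg Fin.val h.1.2; omega
        have hc4 : ¬((((r.i, r.q), (r.i, r.q)) : (Fin (n₁+n₂+n₃) × Fin (n₁+n₂+n₃)) ×
            (Fin (n₁+n₂+n₃) × Fin (n₁+n₂+n₃))) = ((s.i,s.j'),(s.j',s.q))) := by
          intro h; simp only [Prod.mk.injEq] at h
          have := congrArg Fin.val h.1.2; omega
        rw [famCoeff_S1, if_neg hc1, if_neg hc2, if_neg hc3, if_neg hc4]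
        ring
      have e4 : (∑ s : IdxS n₁ n₂ n₃, g (Sum.inr (Sum.inl (Sum.inr s))) *
          famCoeff F n₁ n₂ n₃ (Sum.inr (Sum.inl (Sum.inr s))) ((r.i, r.q), (r.i, r.q))) = 0 := by
        refine Finset.sum_eq_zero fun s _ => ?_
        have hq := r.hq; have hj := s.hj; have hj' := s.hj'
        have hc1 : ¬((((r.i, r.q), (r.i, r.q)) : (Fin (n₁+n₂+n₃) × Fin (n₁+n₂+n₃)) ×
            (Fin (n₁+n₂+n₃) × Fin (n₁+n₂+n₃))) = ((s.j,s.q),(s.i,s.j))) := by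
          intro h; simp only [Prod.mk.injEq] at h
          have := congrArg Fin.val h.2.2; omega
        have hc2 : ¬((((r.i, r.q), (r.i, r.q)) : (Fin (n₁+n₂+n₃) × Fin (n₁+n₂+n₃)) ×
            (Fin (n₁+n₂+n₃) × Fin (n₁+n₂+n₃))) = ((s.j,s.q),(s.i,s.j'))) := by
          intro h; simp only [Prod.mk.injEq] at h
          have := congrArg Fin.val h.2.2; omega
        have hc3 : ¬((((r.i, r.q), (r.i, r.q)) : (Fin (n₁+n₂+n₃) × Fin (n₁+n₂+n₃)) ×
            (Fin (n₁+n₂+n₃) × Fin (n₁+n₂+n₃))) = ((s.j',s.q),(s.i,s.j))) := by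
          intro h; simp only [Prod.mk.injEq] at h
          have := congrArg Fin.val h.2.2; omega
        have hc4 : ¬((((r.i, r.q), (r.i, r.q)) : (Fin (n₁+n₂+n₃) × Fin (n₁+n₂+n₃)) ×
            (Fin (n₁+n₂+n₃) × Fin (n₁+n₂+n₃))) = ((s.j',s.q),(s.i,s.j'))) := by
          intro h; simp only [Prod.mk.injEq] at h
          have := congrArg Fin.val h.2.2; omega
        rw [famCoeff_S2, if_neg hc1, if_neg hc2, if_neg hc3, if_neg hc4]
        ring
      have e5 : (∑ r' : IdxR n₁ n₂ n₃, g (Sum.inr (Sum.inr r')) *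
          famCoeff F n₁ n₂ n₃ (Sum.inr (Sum.inr r')) ((r.i, r.q), (r.i, r.q)))
          = g (Sum.inr (Sum.inr r)) := by
        have e : ∀ r' : IdxR n₁ n₂ n₃, g (Sum.inr (Sum.inr r')) *
            famCoeff F n₁ n₂ n₃ (Sum.inr (Sum.inr r')) ((r.i, r.q), (r.i, r.q))
            = if r' = r then g (Sum.inr (Sum.inr r')) else 0 := by
          intro r'
          have hq := r.hq; have hi' := r'.hi
          have hc1 : ¬((((r.i, r.q), (r.i, r.q)) : (Fin (n₁+n₂+n₃) × Fin (n₁+n₂+n₃)) ×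
              (Fin (n₁+n₂+n₃) × Fin (n₁+n₂+n₃))) = ((r'.i,r'.i),(r'.i,r'.i))) := by
            intro h; simp only [Prod.mk.injEq] at h
            have := congrArg Fin.val h.1.2; omega
          have hc2 : ¬((((r.i, r.q), (r.i, r.q)) : (Fin (n₁+n₂+n₃) × Fin (n₁+n₂+n₃)) ×
              (Fin (n₁+n₂+n₃) × Fin (n₁+n₂+n₃))) = ((r'.i,r'.i),(r'.i,r'.q))) := by
            intro h; simp only [Prod.mk.injEq] at h
            have := congrArg Fin.val h.1.2; omega
          have hc3 : ¬((((r.i, r.q), (r.i, r.q)) : (Fin (n₁+n₂+n₃) × Fin (n₁+n₂+n₃)) ×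
              (Fin (n₁+n₂+n₃) × Fin (n₁+n₂+n₃))) = ((r'.i,r'.q),(r'.i,r'.i))) := by
            intro h; simp only [Prod.mk.injEq] at h
            have := congrArg Fin.val h.2.2; omega
          rw [famCoeff_R, if_neg hc1, if_neg hc2, if_neg hc3]
          by_cases h : r' = r
          · subst h; rw [if_pos rfl, if_pos rfl]; ring
          · rw [if_neg, if_neg h]
            · ring
            · intro hc; simp only [Prod.mk.injEq] at hc
              exact h (IdxR.ext' hc.1.1 hc.1.2 |>.symm)
        rw [Finset.sum_congr rfl fun r' _ => e r',
          Finset.sum_ite_eq' Finset.univ r (fun r' => g (Sum.inr (Sum.inr r')))]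
        simp
      rw [e1, e2, e3, e4, e5] at hk
      simpa using hk
    -- Stage 2 : the S1 coefficients vanish (induction on j)
    have hS1 : ∀ s : IdxS n₁ n₂ n₃, g (Sum.inr (Sum.inl (Sum.inl s))) = 0 := by
      suffices H : ∀ m : ℕ, ∀ s : IdxS n₁ n₂ n₃, (s.j : ℕ) < m →
          g (Sum.inr (Sum.inl (Sum.inl s))) = 0 by
        intro s; exact H ((s.j : ℕ) + 1) s (Nat.lt_succ_self _)
      intro m
      induction m with
      | zero => exact fun s hs => absurd hs (Nat.not_lt_zero _)
      | succ m IH =>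
        intro s hs
        have hk := key ((s.i, s.j), (s.j, s.q))
        simp only [Fintype.sum_sum_type] at hk
        have e1 : (∑ t : IdxT n₁ n₂ n₃, g (Sum.inl (Sum.inl t)) *
            famCoeff F n₁ n₂ n₃ (Sum.inl (Sum.inl t)) ((s.i, s.j), (s.j, s.q))) = 0 := by
          refine Finset.sum_eq_zero fun t _ => ?_
          rw [famCoeff_T1, if_neg, mul_zero]
          intro h; simp only [Prod.mk.injEq] at h
          exact t.hjl (h.1.2.symm.trans h.2.1)
        have e2 : (∑ t : IdxT n₁ n₂ n₃, g (Sum.inl (Sum.inr t)) *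
            famCoeff F n₁ n₂ n₃ (Sum.inl (Sum.inr t)) ((s.i, s.j), (s.j, s.q))) = 0 := by
          refine Finset.sum_eq_zero fun t _ => ?_
          have h1 := s.hq; have h2 := t.hj
          rw [famCoeff_T2, if_neg, mul_zero]
          intro h; simp only [Prod.mk.injEq] at h
          have := congrArg Fin.val h.2.2; omega
        have e3 : (∑ s' : IdxS n₁ n₂ n₃, g (Sum.inr (Sum.inl (Sum.inl s'))) *
            famCoeff F n₁ n₂ n₃ (Sum.inr (Sum.inl (Sum.inl s'))) ((s.i, s.j), (s.j, s.q)))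
            = g (Sum.inr (Sum.inl (Sum.inl s))) := by
          have e : ∀ s' : IdxS n₁ n₂ n₃, g (Sum.inr (Sum.inl (Sum.inl s'))) *
              famCoeff F n₁ n₂ n₃ (Sum.inr (Sum.inl (Sum.inl s'))) ((s.i, s.j), (s.j, s.q))
              = if s' = s then g (Sum.inr (Sum.inl (Sum.inl s'))) else 0 := by
            intro s'
            have haj := s.hj; have haj' := s.hj'; have hbj := s'.hj; have hbj' := s'.hj'
            by_cases h4 : (s'.j' : ℕ) = (s.j : ℕ)
            · have hz : g (Sum.inr (Sum.inl (Sum.inl s'))) = 0 := IH s' (by omega)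
              rw [hz, zero_mul]
              by_cases h : s' = s
              · rw [if_pos h]
              · rw [if_neg h]
            · have hc2 : ¬((((s.i, s.j), (s.j, s.q)) :
                  (Fin (n₁+n₂+n₃) × Fin (n₁+n₂+n₃)) × (Fin (n₁+n₂+n₃) × Fin (n₁+n₂+n₃)))
                  = ((s'.i,s'.j),(s'.j',s'.q))) := by
                intro h; simp only [Prod.mk.injEq] at h
                have := congrArg Fin.val h.2.1; omega
              have hc3 : ¬((((s.i, s.j), (s.j, s.q)) :
                  (Fin (n₁+n₂+n₃) × Fin (n₁+n₂+n₃)) × (Fin (n₁+n₂+n₃) × Fin (n₁+n₂+n₃)))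
                  = ((s'.i,s'.j'),(s'.j,s'.q))) := by
                intro h; simp only [Prod.mk.injEq] at h
                have := congrArg Fin.val h.1.2; omega
              have hc4 : ¬((((s.i, s.j), (s.j, s.q)) :
                  (Fin (n₁+n₂+n₃) × Fin (n₁+n₂+n₃)) × (Fin (n₁+n₂+n₃) × Fin (n₁+n₂+n₃)))
                  = ((s'.i,s'.j'),(s'.j',s'.q))) := by
                intro h; simp only [Prod.mk.injEq] at h
                have := congrArg Fin.val h.1.2; omega
              rw [famCoeff_S1, if_neg hc2, if_neg hc3, if_neg hc4]
              by_cases h : s' = s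
              · subst h; rw [if_pos rfl, if_pos rfl]; ring
              · rw [if_neg, if_neg h]
                · ring
                · intro hc; simp only [Prod.mk.injEq] at hc
                  exact h (IdxS.ext' hc.1.1 hc.1.2 hc.2.2 |>.symm)
          rw [Finset.sum_congr rfl fun s' _ => e s',
            Finset.sum_ite_eq' Finset.univ s (fun s' => g (Sum.inr (Sum.inl (Sum.inl s'))))]
          simp
        have e4 : (∑ s' : IdxS n₁ n₂ n₃, g (Sum.inr (Sum.inl (Sum.inr s'))) *
            famCoeff F n₁ n₂ n₃ (Sum.inr (Sum.inl (Sum.inr s'))) ((s.i, s.j), (s.j, s.q))) = 0 := by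
          refine Finset.sum_eq_zero fun s' _ => ?_
          have h1 := s.hq; have h2 := s'.hj; have h3 := s'.hj'
          have hc1 : ¬((((s.i, s.j), (s.j, s.q)) :
              (Fin (n₁+n₂+n₃) × Fin (n₁+n₂+n₃)) × (Fin (n₁+n₂+n₃) × Fin (n₁+n₂+n₃)))
              = ((s'.j,s'.q),(s'.i,s'.j))) := by
            intro h; simp only [Prod.mk.injEq] at h
            have := congrArg Fin.val h.2.2; omega
          have hc2 : ¬((((s.i, s.j), (s.j, s.q)) :
              (Fin (n₁+n₂+n₃) × Fin (n₁+n₂+n₃)) × (Fin (n₁+n₂+n₃) × Fin (n₁+n₂+n₃)))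
              = ((s'.j,s'.q),(s'.i,s'.j'))) := by
            intro h; simp only [Prod.mk.injEq] at h
            have := congrArg Fin.val h.2.2; omega
          have hc3 : ¬((((s.i, s.j), (s.j, s.q)) :
              (Fin (n₁+n₂+n₃) × Fin (n₁+n₂+n₃)) × (Fin (n₁+n₂+n₃) × Fin (n₁+n₂+n₃)))
              = ((s'.j',s'.q),(s'.i,s'.j))) := by
            intro h; simp only [Prod.mk.injEq] at h
            have := congrArg Fin.val h.2.2; omega
          have hc4 : ¬((((s.i, s.j), (s.j, s.q)) :
              (Fin (n₁+n₂+n₃) × Fin (n₁+n₂+n₃)) × (Fin (n₁+n₂+n₃) × Fin (n₁+n₂+n₃)))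
              = ((s'.j',s'.q),(s'.i,s'.j'))) := by
            intro h; simp only [Prod.mk.injEq] at h
            have := congrArg Fin.val h.2.2; omega
          rw [famCoeff_S2, if_neg hc1, if_neg hc2, if_neg hc3, if_neg hc4]
          ring
        have e5 : (∑ r : IdxR n₁ n₂ n₃, g (Sum.inr (Sum.inr r)) *
            famCoeff F n₁ n₂ n₃ (Sum.inr (Sum.inr r)) ((s.i, s.j), (s.j, s.q))) = 0 :=
          Finset.sum_eq_zero fun r _ => by rw [hR r, zero_mul]
        rw [e1, e2, e3, e4, e5] at hk
        simpa using hk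
    -- Stage 3 : the T1 coefficients vanish
    have hT1 : ∀ t : IdxT n₁ n₂ n₃, g (Sum.inl (Sum.inl t)) = 0 := by
      intro t
      have hk := key ((t.i, t.j), (t.l, t.q))
      simp only [Fintype.sum_sum_type] at hk
      have e1 : (∑ t' : IdxT n₁ n₂ n₃, g (Sum.inl (Sum.inl t')) *
          famCoeff F n₁ n₂ n₃ (Sum.inl (Sum.inl t')) ((t.i, t.j), (t.l, t.q)))
          = g (Sum.inl (Sum.inl t)) := by
        have e : ∀ t' : IdxT n₁ n₂ n₃, g (Sum.inl (Sum.inl t')) *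
            famCoeff F n₁ n₂ n₃ (Sum.inl (Sum.inl t')) ((t.i, t.j), (t.l, t.q))
            = if t' = t then g (Sum.inl (Sum.inl t')) else 0 := by
          intro t'
          rw [famCoeff_T1]
          by_cases h : t' = t
          · subst h; rw [if_pos rfl, if_pos rfl, mul_one]
          · rw [if_neg, if_neg h, mul_zero]
            intro hc; simp only [Prod.mk.injEq] at hc
            exact h (IdxT.ext' hc.1.1 hc.1.2 hc.2.1 hc.2.2 |>.symm)
        rw [Finset.sum_congr rfl fun t' _ => e t',
          Finset.sum_ite_eq' Finset.univ t (fun t' => g (Sum.inl (Sum.inl t')))]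
        simp
      have e2 : (∑ t' : IdxT n₁ n₂ n₃, g (Sum.inl (Sum.inr t')) *
          famCoeff F n₁ n₂ n₃ (Sum.inl (Sum.inr t')) ((t.i, t.j), (t.l, t.q))) = 0 := by
        refine Finset.sum_eq_zero fun t' _ => ?_
        have h1 := t.hq; have h2 := t'.hj
        rw [famCoeff_T2, if_neg, mul_zero]
        intro h; simp only [Prod.mk.injEq] at h
        have := congrArg Fin.val h.2.2; omega
      have e3 : (∑ s : IdxS n₁ n₂ n₃, g (Sum.inr (Sum.inl (Sum.inl s))) *
          famCoeff F n₁ n₂ n₃ (Sum.inr (Sum.inl (Sum.inl s))) ((t.i, t.j), (t.l, t.q))) = 0 :=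
        Finset.sum_eq_zero fun s _ => by rw [hS1 s, zero_mul]
      have e4 : (∑ s : IdxS n₁ n₂ n₃, g (Sum.inr (Sum.inl (Sum.inr s))) *
          famCoeff F n₁ n₂ n₃ (Sum.inr (Sum.inl (Sum.inr s))) ((t.i, t.j), (t.l, t.q))) = 0 := by
        refine Finset.sum_eq_zero fun s _ => ?_
        have h1 := t.hq; have h2 := s.hj; have h3 := s.hj'
        have hc1 : ¬((((t.i, t.j), (t.l, t.q)) :
            (Fin (n₁+n₂+n₃) × Fin (n₁+n₂+n₃)) × (Fin (n₁+n₂+n₃) × Fin (n₁+n₂+n₃)))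
            = ((s.j,s.q),(s.i,s.j))) := by
          intro h; simp only [Prod.mk.injEq] at h
          have := congrArg Fin.val h.2.2; omega
        have hc2 : ¬((((t.i, t.j), (t.l, t.q)) :
            (Fin (n₁+n₂+n₃) × Fin (n₁+n₂+n₃)) × (Fin (n₁+n₂+n₃) × Fin (n₁+n₂+n₃)))
            = ((s.j,s.q),(s.i,s.j'))) := by
          intro h; simp only [Prod.mk.injEq] at h
          have := congrArg Fin.val h.2.2; omega
        have hc3 : ¬((((t.i, t.j), (t.l, t.q)) :
            (Fin (n₁+n₂+n₃) × Fin (n₁+n₂+n₃)) × (Fin (n₁+n₂+n₃) × Fin (n₁+n₂+n₃)))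
            = ((s.j',s.q),(s.i,s.j))) := by
          intro h; simp only [Prod.mk.injEq] at h
          have := congrArg Fin.val h.2.2; omega
        have hc4 : ¬((((t.i, t.j), (t.l, t.q)) :
            (Fin (n₁+n₂+n₃) × Fin (n₁+n₂+n₃)) × (Fin (n₁+n₂+n₃) × Fin (n₁+n₂+n₃)))
            = ((s.j',s.q),(s.i,s.j'))) := by
          intro h; simp only [Prod.mk.injEq] at h
          have := congrArg Fin.val h.2.2; omega
        rw [famCoeff_S2, if_neg hc1, if_neg hc2, if_neg hc3, if_neg hc4]
        ring
      have e5 : (∑ r : IdxR n₁ n₂ n₃, g (Sum.inr (Sum.inr r)) *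
          famCoeff F n₁ n₂ n₃ (Sum.inr (Sum.inr r)) ((t.i, t.j), (t.l, t.q))) = 0 :=
        Finset.sum_eq_zero fun r _ => by rw [hR r, zero_mul]
      rw [e1, e2, e3, e4, e5] at hk
      simpa using hk
    -- Stage 4 : the S2 coefficients vanish (induction on j)
    have hS2 : ∀ s : IdxS n₁ n₂ n₃, g (Sum.inr (Sum.inl (Sum.inr s))) = 0 := by
      suffices H : ∀ m : ℕ, ∀ s : IdxS n₁ n₂ n₃, (s.j : ℕ) < m →
          g (Sum.inr (Sum.inl (Sum.inr s))) = 0 by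
        intro s; exact H ((s.j : ℕ) + 1) s (Nat.lt_succ_self _)
      intro m
      induction m with
      | zero => exact fun s hs => absurd hs (Nat.not_lt_zero _)
      | succ m IH =>
        intro s hs
        have hk := key ((s.j, s.q), (s.i, s.j))
        simp only [Fintype.sum_sum_type] at hk
        have e1 : (∑ t : IdxT n₁ n₂ n₃, g (Sum.inl (Sum.inl t)) *
            famCoeff F n₁ n₂ n₃ (Sum.inl (Sum.inl t)) ((s.j, s.q), (s.i, s.j))) = 0 := by
          refine Finset.sum_eq_zero fun t _ => ?_
          have h1 := s.hq; have h2 := t.hj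
          rw [famCoeff_T1, if_neg, mul_zero]
          intro h; simp only [Prod.mk.injEq] at h
          have := congrArg Fin.val h.1.2; omega
        have e2 : (∑ t : IdxT n₁ n₂ n₃, g (Sum.inl (Sum.inr t)) *
            famCoeff F n₁ n₂ n₃ (Sum.inl (Sum.inr t)) ((s.j, s.q), (s.i, s.j))) = 0 := by
          refine Finset.sum_eq_zero fun t _ => ?_
          rw [famCoeff_T2, if_neg, mul_zero]
          intro h; simp only [Prod.mk.injEq] at h
          exact t.hjl (h.2.2.symm.trans h.1.1)
        have e3 : (∑ s' : IdxS n₁ n₂ n₃, g (Sum.inr (Sum.inl (Sum.inl s'))) *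
            famCoeff F n₁ n₂ n₃ (Sum.inr (Sum.inl (Sum.inl s'))) ((s.j, s.q), (s.i, s.j))) = 0 :=
          Finset.sum_eq_zero fun s' _ => by rw [hS1 s', zero_mul]
        have e4 : (∑ s' : IdxS n₁ n₂ n₃, g (Sum.inr (Sum.inl (Sum.inr s'))) *
            famCoeff F n₁ n₂ n₃ (Sum.inr (Sum.inl (Sum.inr s'))) ((s.j, s.q), (s.i, s.j)))
            = g (Sum.inr (Sum.inl (Sum.inr s))) := by
          have e : ∀ s' : IdxS n₁ n₂ n₃, g (Sum.inr (Sum.inl (Sum.inr s'))) *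
              famCoeff F n₁ n₂ n₃ (Sum.inr (Sum.inl (Sum.inr s'))) ((s.j, s.q), (s.i, s.j))
              = if s' = s then g (Sum.inr (Sum.inl (Sum.inr s'))) else 0 := by
            intro s'
            have haj := s.hj; have haj' := s.hj'; have hbj := s'.hj; have hbj' := s'.hj'
            by_cases h4 : (s'.j' : ℕ) = (s.j : ℕ)
            · have hz : g (Sum.inr (Sum.inl (Sum.inr s'))) = 0 := IH s' (by omega)
              rw [hz, zero_mul]
              by_cases h : s' = s
              · rw [if_pos h]
              · rw [if_neg h]
            · have hc2 : ¬((((s.j, s.q), (s.i, s.j)) :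
                  (Fin (n₁+n₂+n₃) × Fin (n₁+n₂+n₃)) × (Fin (n₁+n₂+n₃) × Fin (n₁+n₂+n₃)))
                  = ((s'.j,s'.q),(s'.i,s'.j'))) := by
                intro h; simp only [Prod.mk.injEq] at h
                have := congrArg Fin.val h.2.2; omega
              have hc3 : ¬((((s.j, s.q), (s.i, s.j)) :
                  (Fin (n₁+n₂+n₃) × Fin (n₁+n₂+n₃)) × (Fin (n₁+n₂+n₃) × Fin (n₁+n₂+n₃)))
                  = ((s'.j',s'.q),(s'.i,s'.j))) := by
                intro h; simp only [Prod.mk.injEq] at h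
                have := congrArg Fin.val h.1.1; omega
              have hc4 : ¬((((s.j, s.q), (s.i, s.j)) :
                  (Fin (n₁+n₂+n₃) × Fin (n₁+n₂+n₃)) × (Fin (n₁+n₂+n₃) × Fin (n₁+n₂+n₃)))
                  = ((s'.j',s'.q),(s'.i,s'.j'))) := by
                intro h; simp only [Prod.mk.injEq] at h
                have := congrArg Fin.val h.1.1; omega
              rw [famCoeff_S2, if_neg hc2, if_neg hc3, if_neg hc4]
              by_cases h : s' = s
              · subst h; rw [if_pos rfl, if_pos rfl]; ring
              · rw [if_neg, if_neg h]
                · ring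
                · intro hc; simp only [Prod.mk.injEq] at hc
                  exact h (IdxS.ext' hc.2.1 hc.1.1 hc.1.2 |>.symm)
          rw [Finset.sum_congr rfl fun s' _ => e s',
            Finset.sum_ite_eq' Finset.univ s (fun s' => g (Sum.inr (Sum.inl (Sum.inr s'))))]
          simp
        have e5 : (∑ r : IdxR n₁ n₂ n₃, g (Sum.inr (Sum.inr r)) *
            famCoeff F n₁ n₂ n₃ (Sum.inr (Sum.inr r)) ((s.j, s.q), (s.i, s.j))) = 0 :=
          Finset.sum_eq_zero fun r _ => by rw [hR r, zero_mul]
        rw [e1, e2, e3, e4, e5] at hk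
        simpa using hk
    -- Stage 5 : the T2 coefficients vanish
    have hT2 : ∀ t : IdxT n₁ n₂ n₃, g (Sum.inl (Sum.inr t)) = 0 := by
      intro t
      have hk := key ((t.l, t.q), (t.i, t.j))
      simp only [Fintype.sum_sum_type] at hk
      have e1 : (∑ t' : IdxT n₁ n₂ n₃, g (Sum.inl (Sum.inl t')) *
          famCoeff F n₁ n₂ n₃ (Sum.inl (Sum.inl t')) ((t.l, t.q), (t.i, t.j))) = 0 := by
        refine Finset.sum_eq_zero fun t' _ => ?_
        have h1 := t.hq; have h2 := t'.hj
        rw [famCoeff_T1, if_neg, mul_zero]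
        intro h; simp only [Prod.mk.injEq] at h
        have := congrArg Fin.val h.1.2; omega
      have e2 : (∑ t' : IdxT n₁ n₂ n₃, g (Sum.inl (Sum.inr t')) *
          famCoeff F n₁ n₂ n₃ (Sum.inl (Sum.inr t')) ((t.l, t.q), (t.i, t.j)))
          = g (Sum.inl (Sum.inr t)) := by
        have e : ∀ t' : IdxT n₁ n₂ n₃, g (Sum.inl (Sum.inr t')) *
            famCoeff F n₁ n₂ n₃ (Sum.inl (Sum.inr t')) ((t.l, t.q), (t.i, t.j))
            = if t' = t then g (Sum.inl (Sum.inr t')) else 0 := by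
          intro t'
          rw [famCoeff_T2]
          by_cases h : t' = t
          · subst h; rw [if_pos rfl, if_pos rfl, mul_one]
          · rw [if_neg, if_neg h, mul_zero]
            intro hc; simp only [Prod.mk.injEq] at hc
            exact h (IdxT.ext' hc.2.1 hc.2.2 hc.1.1 hc.1.2 |>.symm)
        rw [Finset.sum_congr rfl fun t' _ => e t',
          Finset.sum_ite_eq' Finset.univ t (fun t' => g (Sum.inl (Sum.inr t')))]
        simp
      have e3 : (∑ s : IdxS n₁ n₂ n₃, g (Sum.inr (Sum.inl (Sum.inl s))) *
          famCoeff F n₁ n₂ n₃ (Sum.inr (Sum.inl (Sum.inl s))) ((t.l, t.q), (t.i, t.j))) = 0 :=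
        Finset.sum_eq_zero fun s _ => by rw [hS1 s, zero_mul]
      have e4 : (∑ s : IdxS n₁ n₂ n₃, g (Sum.inr (Sum.inl (Sum.inr s))) *
          famCoeff F n₁ n₂ n₃ (Sum.inr (Sum.inl (Sum.inr s))) ((t.l, t.q), (t.i, t.j))) = 0 :=
        Finset.sum_eq_zero fun s _ => by rw [hS2 s, zero_mul]
      have e5 : (∑ r : IdxR n₁ n₂ n₃, g (Sum.inr (Sum.inr r)) *
          famCoeff F n₁ n₂ n₃ (Sum.inr (Sum.inr r)) ((t.l, t.q), (t.i, t.j))) = 0 :=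
        Finset.sum_eq_zero fun r _ => by rw [hR r, zero_mul]
      rw [e1, e2, e3, e4, e5] at hk
      simpa using hk
    rintro ((t | t) | ((s | s) | r))
    · exact hT1 t
    · exact hT2 t
    · exact hS1 s
    · exact hS2 s
    · exact hR r
end

section
/- Let F be a field, n a positive integer, and L = {(i₁, j₁)} a 1-step ladder on n with i₁ ≥ j₁. Set n₁ = j₁ - 1, n₂ = i₁ - j₁ + 1, n₃ = n - i₁. Then M_L decomposes as an internal direct sum M_L = h ⊕ l ⊕ r ⊕ a, where h = span{ e_{i,j} : n₁ < i ≤ n₁+n₂, n₁ < j ≤ n₁+n₂ }, l = span{ e_{i,j} : 1 ≤ i ≤ n₁, n₁ < j ≤ n₁+n₂ }, r = span{ e_{i,j} : n₁ < i ≤ n₁+n₂, n₁+n₂ < j ≤ n }, a = span{ e_{i,j} : 1 ≤ i ≤ n₁, n₁+n₂ < j ≤ n }, and the commutator bracket satisfies the containments [h,h] ⊆ h, [h,l] ⊆ l, [h,r] ⊆ r, [l,r] ⊆ a, [l,l] = 0, [r,r] = 0, [a, M_L] = 0, and [h,a] = 0. -/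
open Matrix

private lemma mem_span_std_iff {F : Type*} [Field F] {n : ℕ} (P : Fin n → Fin n → Prop)
    (A : Matrix (Fin n) (Fin n) F) :
    A ∈ Submodule.span F {B : Matrix (Fin n) (Fin n) F |
        ∃ i j : Fin n, P i j ∧ B = Matrix.single i j 1} ↔
      ∀ i j : Fin n, A i j ≠ 0 → P i j := by
  constructor
  · intro hA
    induction hA using Submodule.span_induction with
    | mem B hB =>
      obtain ⟨i, j, hP, rfl⟩ := hB
      intro a b hab
      simp only [Matrix.single, Matrix.of_apply, ne_eq, ite_eq_right_iff,
        not_forall] at hab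
      obtain ⟨⟨rfl, rfl⟩, -⟩ := hab
      exact hP
    | zero => intro a b hab; simp at hab
    | add x y hx hy ihx ihy =>
      intro a b hab
      by_cases h1 : x a b = 0
      · exact ihy a b (by simpa [Matrix.add_apply, h1] using hab)
      · exact ihx a b h1
    | smul c x hx ihx =>
      intro a b hab
      apply ihx a b
      intro h
      simp [Matrix.smul_apply, h] at hab
  · intro h
    rw [matrix_eq_sum_single A]
    apply Submodule.sum_mem
    intro i _
    apply Submodule.sum_mem
    intro j _
    by_cases hij : A i j = 0
    · simp [hij, Matrix.single_zero]
    · have : Matrix.single i j (A i j) = A i j • Matrix.single i j (1 : F) := by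
        rw [Matrix.smul_single, smul_eq_mul, mul_one]
      rw [this]
      exact Submodule.smul_mem _ _ (Submodule.subset_span ⟨i, j, h i j hij, rfl⟩)

/-- The span of the matrix units `e_{i,j}` (0-based indices) with
`r₁ ≤ i < r₂` and `c₁ ≤ j < c₂`. -/
def blockSpan (F : Type*) [Field F] (n r₁ r₂ c₁ c₂ : ℕ) :
    Submodule F (Matrix (Fin n) (Fin n) F) :=
  Submodule.span F
    { A | ∃ i j : Fin n, r₁ ≤ (i : ℕ) ∧ (i : ℕ) < r₂ ∧ c₁ ≤ (j : ℕ) ∧ (j : ℕ) < c₂ ∧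
      A = Matrix.single i j 1 }

private lemma mem_blockSpan_iff {F : Type*} [Field F] {n : ℕ} (r₁ r₂ c₁ c₂ : ℕ)
    (A : Matrix (Fin n) (Fin n) F) :
    A ∈ blockSpan F n r₁ r₂ c₁ c₂ ↔
      ∀ i j : Fin n, A i j ≠ 0 →
        r₁ ≤ (i : ℕ) ∧ (i : ℕ) < r₂ ∧ c₁ ≤ (j : ℕ) ∧ (j : ℕ) < c₂ := by
  have hset : { A : Matrix (Fin n) (Fin n) F |
      ∃ i j : Fin n, r₁ ≤ (i : ℕ) ∧ (i : ℕ) < r₂ ∧ c₁ ≤ (j : ℕ) ∧ (j : ℕ) < c₂ ∧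
      A = Matrix.single i j 1 } =
      { B : Matrix (Fin n) (Fin n) F | ∃ i j : Fin n,
        (r₁ ≤ (i : ℕ) ∧ (i : ℕ) < r₂ ∧ c₁ ≤ (j : ℕ) ∧ (j : ℕ) < c₂) ∧
        B = Matrix.single i j 1 } := by
    ext B; simp [and_assoc]
  rw [blockSpan, hset, mem_span_std_iff]

private lemma mem_ladderModule_iff {F : Type*} [Field F] {n : ℕ} (i₁ j₁ : ℕ)
    (A : Matrix (Fin n) (Fin n) F) :
    A ∈ ladderModule F n i₁ j₁ ↔
      ∀ i j : Fin n, A i j ≠ 0 → (i : ℕ) + 1 ≤ i₁ ∧ j₁ ≤ (j : ℕ) + 1 := by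
  have hset : { A : Matrix (Fin n) (Fin n) F |
      ∃ i j : Fin n, (i : ℕ) + 1 ≤ i₁ ∧ j₁ ≤ (j : ℕ) + 1 ∧
      A = Matrix.single i j 1 } =
      { B : Matrix (Fin n) (Fin n) F | ∃ i j : Fin n,
        ((i : ℕ) + 1 ≤ i₁ ∧ j₁ ≤ (j : ℕ) + 1) ∧
        B = Matrix.single i j 1 } := by
    ext B; simp [and_assoc]
  rw [ladderModule, hset, mem_span_std_iff]

private lemma mul_entry_support {F : Type*} [Field F] {n : ℕ}
    {x y : Matrix (Fin n) (Fin n) F} {P Q : Fin n → Fin n → Prop}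
    (hx : ∀ i j, x i j ≠ 0 → P i j) (hy : ∀ i j, y i j ≠ 0 → Q i j)
    (i j : Fin n) (h : (x * y) i j ≠ 0) : ∃ k, P i k ∧ Q k j := by
  by_contra hc
  push_neg at hc
  apply h
  rw [Matrix.mul_apply]
  apply Finset.sum_eq_zero
  intro k _
  by_cases hx0 : x i k = 0
  · simp [hx0]
  by_cases hy0 : y k j = 0
  · simp [hy0]
  exact absurd (hy k j hy0) (hc k (hx i k hx0))

private lemma mul_eq_zero_support {F : Type*} [Field F] {n : ℕ}
    {x y : Matrix (Fin n) (Fin n) F} {P Q : Fin n → Fin n → Prop}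
    (hx : ∀ i j, x i j ≠ 0 → P i j) (hy : ∀ i j, y i j ≠ 0 → Q i j)
    (h : ∀ i k j, P i k → Q k j → False) : x * y = 0 := by
  ext i j
  rw [Matrix.zero_apply]
  by_contra hne
  obtain ⟨k, h1, h2⟩ := mul_entry_support hx hy i j hne
  exact h i k j h1 h2

/-- For a one-step ladder with `i₁ ≥ j₁`, with `n₁ = j₁ - 1`, `n₂ = i₁ - j₁ + 1`,
`n₃ = n - i₁`, the ladder matrix Lie algebra decomposes as the internal direct sum
`M_L = h ⊕ l ⊕ r ⊕ a` of the four blocks, and the commutator bracket satisfies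
`[h,h] ⊆ h`, `[h,l] ⊆ l`, `[h,r] ⊆ r`, `[l,r] ⊆ a`, `[l,l] = 0`, `[r,r] = 0`,
`[a, M_L] = 0` and `[h,a] = 0`. -/
theorem ladderModule_block_decomposition
    (F : Type*) [Field F] (n i₁ j₁ : ℕ) (hn : 1 ≤ n)
    (hi₁ : 1 ≤ i₁) (hi₁n : i₁ ≤ n) (hj₁ : 1 ≤ j₁) (hj₁n : j₁ ≤ n) (hij : j₁ ≤ i₁)
    (n₁ n₂ n₃ : ℕ) (hn₁ : n₁ + 1 = j₁) (hn₂' : n₂ + j₁ = i₁ + 1) (hn₃ : n₃ + i₁ = n) :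
    (blockSpan F n n₁ (n₁ + n₂) n₁ (n₁ + n₂)
        ⊔ blockSpan F n 0 n₁ n₁ (n₁ + n₂)
        ⊔ blockSpan F n n₁ (n₁ + n₂) (n₁ + n₂) n
        ⊔ blockSpan F n 0 n₁ (n₁ + n₂) n
      = ladderModule F n i₁ j₁)
    ∧ (∀ xh ∈ blockSpan F n n₁ (n₁ + n₂) n₁ (n₁ + n₂),
        ∀ xl ∈ blockSpan F n 0 n₁ n₁ (n₁ + n₂),
          ∀ xr ∈ blockSpan F n n₁ (n₁ + n₂) (n₁ + n₂) n,
            ∀ xa ∈ blockSpan F n 0 n₁ (n₁ + n₂) n,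
              xh + xl + xr + xa = 0 → xh = 0 ∧ xl = 0 ∧ xr = 0 ∧ xa = 0)
    ∧ (∀ x ∈ blockSpan F n n₁ (n₁ + n₂) n₁ (n₁ + n₂),
        ∀ y ∈ blockSpan F n n₁ (n₁ + n₂) n₁ (n₁ + n₂),
          x * y - y * x ∈ blockSpan F n n₁ (n₁ + n₂) n₁ (n₁ + n₂))
    ∧ (∀ x ∈ blockSpan F n n₁ (n₁ + n₂) n₁ (n₁ + n₂),
        ∀ y ∈ blockSpan F n 0 n₁ n₁ (n₁ + n₂),
          x * y - y * x ∈ blockSpan F n 0 n₁ n₁ (n₁ + n₂))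
    ∧ (∀ x ∈ blockSpan F n n₁ (n₁ + n₂) n₁ (n₁ + n₂),
        ∀ y ∈ blockSpan F n n₁ (n₁ + n₂) (n₁ + n₂) n,
          x * y - y * x ∈ blockSpan F n n₁ (n₁ + n₂) (n₁ + n₂) n)
    ∧ (∀ x ∈ blockSpan F n 0 n₁ n₁ (n₁ + n₂),
        ∀ y ∈ blockSpan F n n₁ (n₁ + n₂) (n₁ + n₂) n,
          x * y - y * x ∈ blockSpan F n 0 n₁ (n₁ + n₂) n)
    ∧ (∀ x ∈ blockSpan F n 0 n₁ n₁ (n₁ + n₂),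
        ∀ y ∈ blockSpan F n 0 n₁ n₁ (n₁ + n₂), x * y - y * x = 0)
    ∧ (∀ x ∈ blockSpan F n n₁ (n₁ + n₂) (n₁ + n₂) n,
        ∀ y ∈ blockSpan F n n₁ (n₁ + n₂) (n₁ + n₂) n, x * y - y * x = 0)
    ∧ (∀ x ∈ blockSpan F n 0 n₁ (n₁ + n₂) n,
        ∀ y ∈ ladderModule F n i₁ j₁, x * y - y * x = 0)
    ∧ (∀ x ∈ blockSpan F n n₁ (n₁ + n₂) n₁ (n₁ + n₂),
        ∀ y ∈ blockSpan F n 0 n₁ (n₁ + n₂) n, x * y - y * x = 0) := by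
  have hblock : n₁ + n₂ = i₁ := by omega
  refine ⟨?_, ?_, ?_, ?_, ?_, ?_, ?_, ?_, ?_, ?_⟩
  · -- decomposition
    apply le_antisymm
    · simp only [sup_le_iff]
      refine ⟨⟨⟨?_, ?_⟩, ?_⟩, ?_⟩ <;>
      · rw [blockSpan, Submodule.span_le]
        rintro B ⟨i, j, h1, h2, h3, h4, rfl⟩
        exact Submodule.subset_span ⟨i, j, by omega, by omega, rfl⟩
    · rw [ladderModule, Submodule.span_le]
      rintro B ⟨i, j, h1, h2, rfl⟩
      have hi := i.isLt
      have hj := j.isLt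
      have memh : ∀ C : Matrix (Fin n) (Fin n) F, C ∈ blockSpan F n n₁ (n₁+n₂) n₁ (n₁+n₂) →
          C ∈ (blockSpan F n n₁ (n₁ + n₂) n₁ (n₁ + n₂)
            ⊔ blockSpan F n 0 n₁ n₁ (n₁ + n₂)
            ⊔ blockSpan F n n₁ (n₁ + n₂) (n₁ + n₂) n
            ⊔ blockSpan F n 0 n₁ (n₁ + n₂) n) := fun C h =>
        Submodule.mem_sup_left (Submodule.mem_sup_left (Submodule.mem_sup_left h))
      have meml : ∀ C : Matrix (Fin n) (Fin n) F, C ∈ blockSpan F n 0 n₁ n₁ (n₁+n₂) →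
          C ∈ (blockSpan F n n₁ (n₁ + n₂) n₁ (n₁ + n₂)
            ⊔ blockSpan F n 0 n₁ n₁ (n₁ + n₂)
            ⊔ blockSpan F n n₁ (n₁ + n₂) (n₁ + n₂) n
            ⊔ blockSpan F n 0 n₁ (n₁ + n₂) n) := fun C h =>
        Submodule.mem_sup_left (Submodule.mem_sup_left (Submodule.mem_sup_right h))
      have memr : ∀ C : Matrix (Fin n) (Fin n) F, C ∈ blockSpan F n n₁ (n₁+n₂) (n₁+n₂) n →
          C ∈ (blockSpan F n n₁ (n₁ + n₂) n₁ (n₁ + n₂)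
            ⊔ blockSpan F n 0 n₁ n₁ (n₁ + n₂)
            ⊔ blockSpan F n n₁ (n₁ + n₂) (n₁ + n₂) n
            ⊔ blockSpan F n 0 n₁ (n₁ + n₂) n) := fun C h =>
        Submodule.mem_sup_left (Submodule.mem_sup_right h)
      have mema : ∀ C : Matrix (Fin n) (Fin n) F, C ∈ blockSpan F n 0 n₁ (n₁+n₂) n →
          C ∈ (blockSpan F n n₁ (n₁ + n₂) n₁ (n₁ + n₂)
            ⊔ blockSpan F n 0 n₁ n₁ (n₁ + n₂)
            ⊔ blockSpan F n n₁ (n₁ + n₂) (n₁ + n₂) n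
            ⊔ blockSpan F n 0 n₁ (n₁ + n₂) n) := fun C h =>
        Submodule.mem_sup_right h
      rcases lt_or_ge (i : ℕ) n₁ with hri | hri <;>
        rcases lt_or_ge (j : ℕ) (n₁ + n₂) with hcj | hcj
      · exact meml _ (Submodule.subset_span ⟨i, j, by omega, by omega, by omega, by omega, rfl⟩)
      · exact mema _ (Submodule.subset_span ⟨i, j, by omega, by omega, by omega, by omega, rfl⟩)
      · exact memh _ (Submodule.subset_span ⟨i, j, by omega, by omega, by omega, by omega, rfl⟩)
      · exact memr _ (Submodule.subset_span ⟨i, j, by omega, by omega, by omega, by omega, rfl⟩)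
  · -- independence
    intro xh hxh xl hxl xr hxr xa hxa hsum
    rw [mem_blockSpan_iff] at hxh hxl hxr hxa
    have key : ∀ i j : Fin n, xh i j + xl i j + xr i j + xa i j = 0 := by
      intro i j
      have := congrFun (congrFun hsum i) j
      simpa [Matrix.add_apply] using this
    have zh : ∀ (A : Matrix (Fin n) (Fin n) F)
        (h : ∀ i j : Fin n, A i j ≠ 0 →
          n₁ ≤ (i : ℕ) ∧ (i : ℕ) < n₁ + n₂ ∧ n₁ ≤ (j : ℕ) ∧ (j : ℕ) < n₁ + n₂)
        (i j : Fin n), ¬(n₁ ≤ (i : ℕ) ∧ (i : ℕ) < n₁ + n₂ ∧ n₁ ≤ (j : ℕ) ∧ (j : ℕ) < n₁ + n₂) →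
        A i j = 0 := fun A h i j hc => by by_contra hne; exact hc (h i j hne)
    refine ⟨?_, ?_, ?_, ?_⟩
    · ext i j
      rw [Matrix.zero_apply]
      by_cases hc : n₁ ≤ (i : ℕ) ∧ (i : ℕ) < n₁ + n₂ ∧ n₁ ≤ (j : ℕ) ∧ (j : ℕ) < n₁ + n₂
      · have h1 : xl i j = 0 := by by_contra hne; have := hxl i j hne; omega
        have h2 : xr i j = 0 := by by_contra hne; have := hxr i j hne; omega
        have h3 : xa i j = 0 := by by_contra hne; have := hxa i j hne; omega
        have := key i j
        rw [h1, h2, h3] at this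
        simpa using this
      · by_contra hne; exact hc (hxh i j hne)
    · ext i j
      rw [Matrix.zero_apply]
      by_cases hc : (i : ℕ) < n₁ ∧ n₁ ≤ (j : ℕ) ∧ (j : ℕ) < n₁ + n₂
      · have h1 : xh i j = 0 := by by_contra hne; have := hxh i j hne; omega
        have h2 : xr i j = 0 := by by_contra hne; have := hxr i j hne; omega
        have h3 : xa i j = 0 := by by_contra hne; have := hxa i j hne; omega
        have := key i j
        rw [h1, h2, h3] at this
        simpa using this
      · by_contra hne; have := hxl i j hne; exact hc ⟨by omega, by omega, by omega⟩
    · ext i j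
      rw [Matrix.zero_apply]
      by_cases hc : n₁ ≤ (i : ℕ) ∧ (i : ℕ) < n₁ + n₂ ∧ n₁ + n₂ ≤ (j : ℕ)
      · have h1 : xh i j = 0 := by by_contra hne; have := hxh i j hne; omega
        have h2 : xl i j = 0 := by by_contra hne; have := hxl i j hne; omega
        have h3 : xa i j = 0 := by by_contra hne; have := hxa i j hne; omega
        have := key i j
        rw [h1, h2, h3] at this
        simpa using this
      · by_contra hne; have := hxr i j hne; exact hc ⟨by omega, by omega, by omega⟩
    · ext i j
      rw [Matrix.zero_apply]
      by_cases hc : (i : ℕ) < n₁ ∧ n₁ + n₂ ≤ (j : ℕ)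
      · have h1 : xh i j = 0 := by by_contra hne; have := hxh i j hne; omega
        have h2 : xl i j = 0 := by by_contra hne; have := hxl i j hne; omega
        have h3 : xr i j = 0 := by by_contra hne; have := hxr i j hne; omega
        have := key i j
        rw [h1, h2, h3] at this
        simpa using this
      · by_contra hne; have := hxa i j hne; exact hc ⟨by omega, by omega⟩
  · -- [h,h] ⊆ h
    intro x hx y hy
    rw [mem_blockSpan_iff] at hx hy ⊢
    intro i j hne
    rw [Matrix.sub_apply] at hne
    have : (x * y) i j ≠ 0 ∨ (y * x) i j ≠ 0 := by
      by_contra hc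
      push_neg at hc
      rw [hc.1, hc.2, sub_self] at hne
      exact hne rfl
    rcases this with h' | h'
    · obtain ⟨k, hk1, hk2⟩ := mul_entry_support hx hy i j h'; omega
    · obtain ⟨k, hk1, hk2⟩ := mul_entry_support hy hx i j h'; omega
  · -- [h,l] ⊆ l
    intro x hx y hy
    rw [mem_blockSpan_iff] at hx hy ⊢
    intro i j hne
    rw [Matrix.sub_apply] at hne
    have : (x * y) i j ≠ 0 ∨ (y * x) i j ≠ 0 := by
      by_contra hc
      push_neg at hc
      rw [hc.1, hc.2, sub_self] at hne
      exact hne rfl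
    rcases this with h' | h'
    · obtain ⟨k, hk1, hk2⟩ := mul_entry_support hx hy i j h'; omega
    · obtain ⟨k, hk1, hk2⟩ := mul_entry_support hy hx i j h'; omega
  · -- [h,r] ⊆ r
    intro x hx y hy
    rw [mem_blockSpan_iff] at hx hy ⊢
    intro i j hne
    rw [Matrix.sub_apply] at hne
    have : (x * y) i j ≠ 0 ∨ (y * x) i j ≠ 0 := by
      by_contra hc
      push_neg at hc
      rw [hc.1, hc.2, sub_self] at hne
      exact hne rfl
    rcases this with h' | h'
    · obtain ⟨k, hk1, hk2⟩ := mul_entry_support hx hy i j h'; omega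
    · obtain ⟨k, hk1, hk2⟩ := mul_entry_support hy hx i j h'; omega
  · -- [l,r] ⊆ a
    intro x hx y hy
    rw [mem_blockSpan_iff] at hx hy ⊢
    intro i j hne
    rw [Matrix.sub_apply] at hne
    have : (x * y) i j ≠ 0 ∨ (y * x) i j ≠ 0 := by
      by_contra hc
      push_neg at hc
      rw [hc.1, hc.2, sub_self] at hne
      exact hne rfl
    rcases this with h' | h'
    · obtain ⟨k, hk1, hk2⟩ := mul_entry_support hx hy i j h'; omega
    · obtain ⟨k, hk1, hk2⟩ := mul_entry_support hy hx i j h'; omega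
  · -- [l,l] = 0
    intro x hx y hy
    rw [mem_blockSpan_iff] at hx hy
    have h1 : x * y = 0 := mul_eq_zero_support hx hy (fun i k j hp hq => by omega)
    have h2 : y * x = 0 := mul_eq_zero_support hy hx (fun i k j hp hq => by omega)
    rw [h1, h2, sub_self]
  · -- [r,r] = 0
    intro x hx y hy
    rw [mem_blockSpan_iff] at hx hy
    have h1 : x * y = 0 := mul_eq_zero_support hx hy (fun i k j hp hq => by omega)
    have h2 : y * x = 0 := mul_eq_zero_support hy hx (fun i k j hp hq => by omega)
    rw [h1, h2, sub_self]
  · -- [a, M_L] = 0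
    intro x hx y hy
    rw [mem_blockSpan_iff] at hx
    rw [mem_ladderModule_iff] at hy
    have h1 : x * y = 0 := mul_eq_zero_support hx hy (fun i k j hp hq => by omega)
    have h2 : y * x = 0 := mul_eq_zero_support hy hx (fun i k j hp hq => by omega)
    rw [h1, h2, sub_self]
  · -- [h,a] = 0
    intro x hx y hy
    rw [mem_blockSpan_iff] at hx hy
    have h1 : x * y = 0 := mul_eq_zero_support hx hy (fun i k j hp hq => by omega)
    have h2 : y * x = 0 := mul_eq_zero_support hy hx (fun i k j hp hq => by omega)
    rw [h1, h2, sub_self]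
end
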